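/- arXiv:math/0504003 — 7 statements merged into one kernel-verified Lean document; each statement's English description precedes it below -/
import Mathlib

section
/- Let p be an odd prime and l ∈ ℕ. If z = μ₁ e_{n₁} + ⋯ + μ_h e_{n_h} in ℤ(p^∞) with n₁ < ⋯ < n_h and nonzero integers μ_i satisfying Σ|μ_i| ≤ l, then the canonical form of z has at most l nonzero coefficients, i.e., λ(z) ≤ l. -/
open Filter Topology

noncomputable section

/-- The Prüfer `p`-group, as the subgroup of `ℚ/ℤ` of elements of `p`-power order. -/
def Prufer (p : ℕ) : AddSubgroup (AddCircle (1 : ℚ)) where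
  carrier := {x | ∃ n : ℕ, p ^ n • x = 0}
  zero_mem' := ⟨0, smul_zero _⟩
  add_mem' := by
    rintro a b ⟨m, hm⟩ ⟨n, hn⟩
    refine ⟨m + n, ?_⟩
    have ha : p ^ (m + n) • a = 0 := by
      rw [pow_add, mul_comm, mul_smul, hm, smul_zero]
    have hb : p ^ (m + n) • b = 0 := by
      rw [pow_add, mul_smul, hn, smul_zero]
    rw [smul_add, ha, hb, add_zero]
  neg_mem' := by
    rintro a ⟨n, hn⟩
    exact ⟨n, by rw [smul_neg, hn, neg_zero]⟩

/-- The element `e_n = 1/p^n` of the Prüfer `p`-group. -/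
def eP (p n : ℕ) : Prufer p :=
  ⟨((((p : ℚ) ^ n)⁻¹ : ℚ) : AddCircle (1 : ℚ)), n, by
    rcases eq_or_ne ((p : ℚ) ^ n) 0 with h | h
    · simp [h]
    · have key : ((p ^ n : ℕ) • ((((p : ℚ) ^ n)⁻¹ : ℚ)) : ℚ) = (1 : ℚ) := by
        rw [nsmul_eq_mul]
        push_cast
        field_simp
      calc p ^ n • ((((p : ℚ) ^ n)⁻¹ : ℚ) : AddCircle (1 : ℚ))
          = (((p ^ n : ℕ) • (((p : ℚ) ^ n)⁻¹ : ℚ) : ℚ) : AddCircle (1 : ℚ)) := by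
            norm_cast
        _ = ((1 : ℚ) : AddCircle (1 : ℚ)) := by rw [key]
        _ = 0 := AddCircle.coe_period 1⟩

/-- `{a_k}` is a T-sequence: it converges to `0` in some Hausdorff group topology. -/
def IsTSeq {A : Type*} [AddCommGroup A] (a : ℕ → A) : Prop :=
  ∃ τ : TopologicalSpace A, @IsTopologicalAddGroup A τ _ ∧ @T2Space A τ ∧
    Filter.Tendsto a Filter.atTop (@nhds A τ 0)

/-- The set `A(l,m)` of sums `m₁ a_{k₁} + ⋯ + m_h a_{k_h}` with distinct indices `kᵢ ≥ m`,
nonzero integer coefficients, and `Σ|mᵢ| ≤ l`. -/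
def TSet {A : Type*} [AddCommGroup A] (a : ℕ → A) (l m : ℕ) : Set A :=
  {x | ∃ (s : Finset ℕ) (c : ℕ → ℤ), (∀ k ∈ s, m ≤ k) ∧ (∀ k ∈ s, c k ≠ 0) ∧
    (∑ k ∈ s, (c k).natAbs) ≤ l ∧ x = ∑ k ∈ s, c k • a k}

/-- `σ` is a finitely supported representation `y = Σ_{n ≥ 1} σ_n e_n`. -/
def IsRep (p : ℕ) (y : Prufer p) (σ : ℕ →₀ ℤ) : Prop :=
  σ 0 = 0 ∧ y = ∑ n ∈ σ.support, σ n • eP p n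

/-- `σ` is the canonical form of `y`: a representation with `|σ_n| ≤ (p-1)/2`. -/
def IsCanonical (p : ℕ) (y : Prufer p) (σ : ℕ →₀ ℤ) : Prop :=
  IsRep p y σ ∧ ∀ n, 2 * (σ n).natAbs ≤ p - 1


noncomputable section

/-- Balanced residue of `a` mod `p`. -/
def balZ (p : ℕ) (a : ℤ) : ℤ := (a + ((p : ℤ) - 1) / 2) % (p : ℤ) - ((p : ℤ) - 1) / 2

/-- Quotient after removing the balanced residue. -/
def shiftZ (p : ℕ) (a : ℤ) : ℤ := (a - balZ p a) / (p : ℤ)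

lemma dvd_sub_balZ (p : ℕ) (a : ℤ) : (p : ℤ) ∣ a - balZ p a := by
  unfold balZ
  have : a - ((a + ((p : ℤ) - 1) / 2) % (p : ℤ) - ((p : ℤ) - 1) / 2)
      = (a + ((p : ℤ) - 1) / 2) - (a + ((p : ℤ) - 1) / 2) % (p : ℤ) := by ring
  rw [this]
  exact Int.dvd_self_sub_of_emod_eq rfl

lemma balZ_add_mul (p : ℕ) (a : ℤ) : balZ p a + (p : ℤ) * shiftZ p a = a := by
  have h := Int.ediv_mul_cancel (dvd_sub_balZ p a)
  unfold shiftZ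
  rw [mul_comm]
  omega

lemma balZ_zero (p : ℕ) (hp : 0 < p) : balZ p 0 = 0 := by
  unfold balZ
  have hp' : (1 : ℤ) ≤ (p : ℤ) := by exact_mod_cast hp
  have h0 : 0 ≤ ((p : ℤ) - 1) / 2 := by omega
  have h1 : ((p : ℤ) - 1) / 2 < (p : ℤ) := by omega
  rw [zero_add, Int.emod_eq_of_lt h0 h1]
  ring

lemma shiftZ_zero (p : ℕ) (hp : 0 < p) : shiftZ p 0 = 0 := by
  unfold shiftZ
  rw [balZ_zero p hp]
  simp

section Odd
variable {p : ℕ} {h : ℤ} (hh : 1 ≤ h) (hp : (p : ℤ) = 2 * h + 1)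
include hh hp

lemma balZ_le (a : ℤ) : balZ p a ≤ h ∧ -h ≤ balZ p a := by
  have hdiv : ((p : ℤ) - 1) / 2 = h := by omega
  have hp0 : (0 : ℤ) < (p : ℤ) := by omega
  have h1 : 0 ≤ (a + h) % (p : ℤ) := Int.emod_nonneg _ (by omega)
  have h2 : (a + h) % (p : ℤ) < (p : ℤ) := Int.emod_lt_of_pos _ hp0
  unfold balZ
  rw [hdiv]
  omega

lemma balZ_abs_le (a : ℤ) : (balZ p a).natAbs ≤ h.natAbs := by
  have := balZ_le hh hp a
  omega

/-- Uniqueness of the balanced representation. -/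
lemma balZ_eq_of (a u v : ℤ) (hu : u.natAbs ≤ h.natAbs) (huv : a = u + (p : ℤ) * v) :
    balZ p a = u ∧ shiftZ p a = v := by
  have hb := balZ_le hh hp a
  have hu' : -h ≤ u ∧ u ≤ h := by omega
  have h1 : (p : ℤ) ∣ a - balZ p a := dvd_sub_balZ p a
  have h2 : (p : ℤ) ∣ a - u := ⟨v, by omega⟩
  have hd : (p : ℤ) ∣ balZ p a - u := by
    rcases h2.sub h1 with ⟨k, hk⟩
    exact ⟨k, by omega⟩
  have hbu : balZ p a = u := by
    rcases hd with ⟨k, hk⟩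
    have hk0 : k = 0 := by
      rcases lt_trichotomy k 0 with hk' | hk' | hk'
      · have h5 : (p : ℤ) * k ≤ (p : ℤ) * (-1) := by
          apply mul_le_mul_of_nonneg_left (by omega) (by omega)
        have h6 : (p : ℤ) * (-1) = -(p : ℤ) := by ring
        omega
      · exact hk'
      · have h5 : (p : ℤ) * 1 ≤ (p : ℤ) * k := by
          apply mul_le_mul_of_nonneg_left (by omega) (by omega)
        have h6 : (p : ℤ) * 1 = (p : ℤ) := by ring
        omega
    rw [hk0, mul_zero] at hk
    omega
  refine ⟨hbu, ?_⟩
  have h3 := balZ_add_mul p a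
  have : (p : ℤ) * shiftZ p a = (p : ℤ) * v := by omega
  exact mul_left_cancel₀ (by omega : (p:ℤ) ≠ 0) this

lemma shiftZ_natAbs_lt (a : ℤ) (ha : a ≠ 0) : (shiftZ p a).natAbs < a.natAbs := by
  have hb := balZ_abs_le hh hp a
  have h1 := balZ_add_mul p a
  have hnat : p * (shiftZ p a).natAbs ≤ a.natAbs + h.natAbs := by
    have h2 : ((p : ℤ) * shiftZ p a).natAbs = p * (shiftZ p a).natAbs := by
      rw [Int.natAbs_mul, Int.natAbs_natCast]
    have h3 : (p : ℤ) * shiftZ p a = a - balZ p a := by omega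
    calc p * (shiftZ p a).natAbs = (a - balZ p a).natAbs := by rw [← h2, h3]
      _ ≤ a.natAbs + (balZ p a).natAbs := Int.natAbs_sub_le a (balZ p a)
      _ ≤ a.natAbs + h.natAbs := by omega
  by_contra hc
  push_neg at hc
  have h6 : p * a.natAbs ≤ p * (shiftZ p a).natAbs := Nat.mul_le_mul_left p hc
  have h7 : p * a.natAbs = 2 * (h.natAbs * a.natAbs) + a.natAbs := by
    have hpn : p = 2 * h.natAbs + 1 := by omega
    rw [hpn]; ring
  have h8 : h.natAbs * 1 ≤ h.natAbs * a.natAbs := Nat.mul_le_mul_left _ (by omega)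
  omega

end Odd
/-- Number of nonzero balanced base-`p` digits. -/
def wZ (p : ℕ) (a : ℤ) : ℕ :=
  if hc : 3 ≤ p ∧ p % 2 = 1 ∧ a ≠ 0 then
    (if balZ p a = 0 then 0 else 1) + wZ p (shiftZ p a)
  else 0
termination_by a.natAbs
decreasing_by
  obtain ⟨h3, hmod, ha⟩ := hc
  exact shiftZ_natAbs_lt (h := ((p / 2 : ℕ) : ℤ)) (by omega) (by push_cast; omega) a ha

lemma wZ_zero (p : ℕ) : wZ p 0 = 0 := by
  rw [wZ]; simp

section Odd2
variable {p : ℕ} {h : ℤ} (hh : 1 ≤ h) (hp : (p : ℤ) = 2 * h + 1)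
include hh hp

lemma wZ_eq (a : ℤ) :
    wZ p a = (if balZ p a = 0 then 0 else 1) + wZ p (shiftZ p a) := by
  rcases eq_or_ne a 0 with rfl | ha
  · rw [balZ_zero p (by omega), shiftZ_zero p (by omega), wZ_zero]
    simp
  · rw [wZ]
    rw [dif_pos ⟨by omega, by omega, ha⟩]

lemma wZ_add_unit (a ε : ℤ) (hε : ε = 1 ∨ ε = -1) : wZ p (a + ε) ≤ wZ p a + 1 := by
  have hmain : ∀ (n : ℕ) (a ε : ℤ), a.natAbs ≤ n → (ε = 1 ∨ ε = -1) →
      wZ p (a + ε) ≤ wZ p a + 1 := by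
    intro n
    induction n with
    | zero =>
      intro a ε ha hε
      have ha0 : a = 0 := by omega
      subst ha0
      have hε' : ε.natAbs ≤ h.natAbs := by omega
      obtain ⟨hb, hs⟩ := balZ_eq_of hh hp ε ε 0 hε' (by ring)
      rw [zero_add, wZ_eq hh hp ε, hb, hs, wZ_zero]
      split <;> omega
    | succ n ih =>
      intro a ε ha hε
      rcases eq_or_ne a 0 with rfl | ha0
      · have hε' : ε.natAbs ≤ h.natAbs := by omega
        obtain ⟨hb, hs⟩ := balZ_eq_of hh hp ε ε 0 hε' (by ring)
        rw [zero_add, wZ_eq hh hp ε, hb, hs, wZ_zero]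
        split <;> omega
      · have hrep : a = balZ p a + (p : ℤ) * shiftZ p a := (balZ_add_mul p a).symm
        have hdb := balZ_le hh hp a
        rcases le_or_gt (balZ p a + ε).natAbs h.natAbs with hcase | hcase
        · obtain ⟨hb, hs⟩ := balZ_eq_of hh hp (a + ε) (balZ p a + ε) (shiftZ p a)
            hcase (by omega)
          rw [wZ_eq hh hp (a + ε), hb, hs, wZ_eq hh hp a]
          split <;> split <;> omega
        · -- carry case : balZ p a = ε * h
          have hd : balZ p a = ε * h := by
            rcases hε with rfl | rfl <;> omega
          have hrep2 : a + ε = (-(ε * h)) + (p : ℤ) * (shiftZ p a + ε) := by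
            rw [hp] at hrep ⊢
            rcases hε with rfl | rfl <;> nlinarith [hrep, hd]
          obtain ⟨hb, hs⟩ := balZ_eq_of hh hp (a + ε) (-(ε * h)) (shiftZ p a + ε)
            (by rcases hε with rfl | rfl <;> simp <;> omega) hrep2
          have hlt : (shiftZ p a).natAbs < a.natAbs := shiftZ_natAbs_lt hh hp a ha0
          have hih := ih (shiftZ p a) ε (by omega) hε
          rw [wZ_eq hh hp (a + ε), hb, hs, wZ_eq hh hp a, hd]
          have hne1 : ¬(-(ε * h) = 0) := by rcases hε with rfl | rfl <;> simp <;> omega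
          have hne2 : ¬(ε * h = 0) := by rcases hε with rfl | rfl <;> simp <;> omega
          rw [if_neg hne1, if_neg hne2]
          omega
  exact hmain a.natAbs a ε le_rfl hε

lemma wZ_add_unit_pow (a ε : ℤ) (j : ℕ) (hε : ε = 1 ∨ ε = -1) :
    wZ p (a + ε * (p : ℤ) ^ j) ≤ wZ p a + 1 := by
  induction j generalizing a with
  | zero => simpa using wZ_add_unit hh hp a ε hε
  | succ j ih =>
    have hrep : a + ε * (p : ℤ) ^ (j + 1)
        = balZ p a + (p : ℤ) * (shiftZ p a + ε * (p : ℤ) ^ j) := by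
      have := balZ_add_mul p a
      ring_nf
      ring_nf at this
      nlinarith [this]
    obtain ⟨hb, hs⟩ := balZ_eq_of hh hp _ (balZ p a) (shiftZ p a + ε * (p : ℤ) ^ j)
      (balZ_abs_le hh hp a) hrep
    rw [wZ_eq hh hp (a + ε * (p : ℤ) ^ (j + 1)), hb, hs, wZ_eq hh hp a]
    have := ih (shiftZ p a)
    split <;> omega

lemma wZ_add_mul_pow (a μ : ℤ) (j : ℕ) :
    wZ p (a + μ * (p : ℤ) ^ j) ≤ wZ p a + μ.natAbs := by
  have hmain : ∀ (n : ℕ) (a μ : ℤ), μ.natAbs ≤ n →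
      wZ p (a + μ * (p : ℤ) ^ j) ≤ wZ p a + μ.natAbs := by
    intro n
    induction n with
    | zero =>
      intro a μ hμ
      have : μ = 0 := by omega
      subst this
      simp
    | succ n ih =>
      intro a μ hμ
      rcases eq_or_ne μ 0 with rfl | hμ0
      · simp
      · set ε : ℤ := if 0 ≤ μ then 1 else -1 with hεdef
        have hε : ε = 1 ∨ ε = -1 := by unfold ε; split <;> simp
        have hμ' : (μ - ε).natAbs ≤ n := by unfold ε; split <;> omega
        have hrw : a + μ * (p : ℤ) ^ j
            = (a + (μ - ε) * (p : ℤ) ^ j) + ε * (p : ℤ) ^ j := by ring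
        rw [hrw]
        calc wZ p ((a + (μ - ε) * (p : ℤ) ^ j) + ε * (p : ℤ) ^ j)
            ≤ wZ p (a + (μ - ε) * (p : ℤ) ^ j) + 1 :=
              wZ_add_unit_pow hh hp _ ε j hε
          _ ≤ wZ p a + (μ - ε).natAbs + 1 := by
              have := ih a (μ - ε) hμ'
              omega
          _ ≤ wZ p a + μ.natAbs := by unfold ε at *; split at hμ' <;> omega
  exact hmain μ.natAbs a μ le_rfl

lemma wZ_sum (s : Finset ℕ) (μ : ℕ → ℤ) (g : ℕ → ℕ) :
    wZ p (∑ k ∈ s, μ k * (p : ℤ) ^ (g k)) ≤ ∑ k ∈ s, (μ k).natAbs := by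
  induction s using Finset.induction_on with
  | empty => simp [wZ_zero]
  | @insert k t hk ih =>
    rw [Finset.sum_insert hk, Finset.sum_insert hk, add_comm (μ k * _)]
    calc wZ p ((∑ x ∈ t, μ x * (p : ℤ) ^ g x) + μ k * (p : ℤ) ^ g k)
        ≤ wZ p (∑ x ∈ t, μ x * (p : ℤ) ^ g x) + (μ k).natAbs :=
          wZ_add_mul_pow hh hp _ _ _
      _ ≤ (μ k).natAbs + ∑ x ∈ t, (μ x).natAbs := by omega

end Odd2

/-- The `i`-th balanced digit. -/
def digZ (p : ℕ) (a : ℤ) (i : ℕ) : ℤ := balZ p ((shiftZ p)^[i] a)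

lemma digZ_zero' (p : ℕ) (a : ℤ) : digZ p a 0 = balZ p a := rfl

lemma digZ_succ (p : ℕ) (a : ℤ) (i : ℕ) :
    digZ p a (i + 1) = digZ p (shiftZ p a) i := by
  rw [digZ, digZ, Function.iterate_succ_apply]

section Odd3
variable {p : ℕ} {h : ℤ} (hh : 1 ≤ h) (hp : (p : ℤ) = 2 * h + 1)
include hh hp

lemma digZ_count_le (N : ℕ) (a : ℤ) :
    ((Finset.range N).filter (fun i => digZ p a i ≠ 0)).card ≤ wZ p a := by
  induction N generalizing a with
  | zero => simp
  | succ N ih =>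
    rw [Finset.card_filter, Finset.sum_range_succ']
    have hrw : ∀ i, (if digZ p a (i + 1) ≠ 0 then 1 else 0)
        = (if digZ p (shiftZ p a) i ≠ 0 then 1 else 0) := by
      intro i; rw [digZ_succ]
    simp only [hrw]
    rw [← Finset.card_filter]
    have h1 := ih (shiftZ p a)
    rw [wZ_eq hh hp a, digZ_zero']
    split <;> omega

end Odd3

lemma digZ_telescope (p : ℕ) (N : ℕ) (a : ℤ) :
    (∑ i ∈ Finset.range N, digZ p a i * (p : ℤ) ^ i)
      + (p : ℤ) ^ N * (shiftZ p)^[N] a = a := by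
  induction N with
  | zero => simp
  | succ N ih =>
    rw [Finset.sum_range_succ]
    have hkey := balZ_add_mul p ((shiftZ p)^[N] a)
    have hit : (shiftZ p)^[N + 1] a = shiftZ p ((shiftZ p)^[N] a) :=
      Function.iterate_succ_apply' _ _ _
    rw [hit]
    have : digZ p a N = balZ p ((shiftZ p)^[N] a) := rfl
    rw [this]
    linear_combination ih + (p : ℤ) ^ N * hkey
/-- The projection `ℚ →+ ℚ/ℤ`. -/
def phiQ : ℚ →+ AddCircle (1 : ℚ) := QuotientAddGroup.mk' _

lemma phiQ_eq (q : ℚ) : phiQ q = (q : AddCircle (1 : ℚ)) := rfl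

lemma phiQ_int (m : ℤ) : phiQ (m : ℚ) = 0 := by
  rw [phiQ_eq, AddCircle.coe_eq_zero_iff]
  exact ⟨m, by simp⟩

lemma coe_eP (p n : ℕ) :
    ((eP p n : Prufer p) : AddCircle (1 : ℚ)) = phiQ (((p : ℚ) ^ n)⁻¹) := rfl

lemma coe_sum_eP (p : ℕ) (s : Finset ℕ) (μ : ℕ → ℤ) :
    ((∑ k ∈ s, μ k • eP p k : Prufer p) : AddCircle (1 : ℚ))
      = phiQ (∑ k ∈ s, (μ k : ℚ) * ((p : ℚ) ^ k)⁻¹) := by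
  rw [map_sum]
  have h1 : ((∑ k ∈ s, μ k • eP p k : Prufer p) : AddCircle (1 : ℚ))
      = ∑ k ∈ s, ((μ k • eP p k : Prufer p) : AddCircle (1 : ℚ)) := by
    rw [← AddSubgroup.coe_subtype, map_sum]
  rw [h1]
  apply Finset.sum_congr rfl
  intro k hk
  have h2 : ((μ k • eP p k : Prufer p) : AddCircle (1 : ℚ))
      = μ k • ((eP p k : Prufer p) : AddCircle (1 : ℚ)) := rfl
  rw [h2, coe_eP, ← map_zsmul phiQ]
  congr 1

lemma rat_sum_eq (p : ℕ) (hp0 : 0 < p) (s : Finset ℕ) (μ : ℕ → ℤ) (N : ℕ)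
    (hN : ∀ k ∈ s, k ≤ N) :
    ∑ k ∈ s, (μ k : ℚ) * ((p : ℚ) ^ k)⁻¹
      = ((∑ k ∈ s, μ k * (p : ℤ) ^ (N - k) : ℤ) : ℚ) / (p : ℚ) ^ N := by
  have hpQ : (0 : ℚ) < (p : ℚ) := by exact_mod_cast hp0
  push_cast
  rw [Finset.sum_div]
  apply Finset.sum_congr rfl
  intro k hk
  have hk' : k ≤ N := hN k hk
  have hterm : ((p : ℚ) ^ k)⁻¹ = (p : ℚ) ^ (N - k) / (p : ℚ) ^ N := by
    field_simp
    rw [← pow_add]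
    congr 1
    omega
  rw [hterm]
  ring
section Uniq
variable {p : ℕ} {h : ℤ} (hh : 1 ≤ h) (hp : (p : ℤ) = 2 * h + 1)
include hh hp

lemma rep_unique (τ : ℕ →₀ ℤ) (h0 : τ 0 = 0) (hbd : ∀ n, (τ n).natAbs ≤ p - 1)
    (hsum : (∑ n ∈ τ.support, τ n • eP p n : Prufer p) = 0) : τ = 0 := by
  by_contra hτ
  have hne : τ.support.Nonempty := Finsupp.support_nonempty_iff.mpr hτ
  set N := τ.support.sup id with hNdef
  have hNle : ∀ n ∈ τ.support, n ≤ N := fun n hn => Finset.le_sup (f := id) hn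
  have hp0 : 0 < p := by omega
  -- pass to ℚ/ℤ
  have hcoe : ((∑ n ∈ τ.support, τ n • eP p n : Prufer p) : AddCircle (1 : ℚ)) = 0 := by
    rw [hsum]; rfl
  rw [coe_sum_eP, rat_sum_eq p hp0 τ.support τ N hNle] at hcoe
  set b : ℤ := ∑ n ∈ τ.support, τ n * (p : ℤ) ^ (N - n) with hbdef
  rw [phiQ_eq, AddCircle.coe_eq_zero_iff] at hcoe
  obtain ⟨m, hm⟩ := hcoe
  have hmq : (b : ℚ) = m * (p : ℚ) ^ N := by
    have hpN : ((p : ℚ) ^ N) ≠ 0 := by positivity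
    rw [zsmul_eq_mul, mul_one] at hm
    field_simp at hm
    linarith [hm]
  have hb : b = m * (p : ℤ) ^ N := by exact_mod_cast hmq
  -- the maximal element of the support
  set M := τ.support.max' hne with hMdef
  have hM : M ∈ τ.support := τ.support.max'_mem hne
  have hM1 : 1 ≤ M := by
    rcases Nat.eq_zero_or_pos M with h' | h'
    · exfalso; apply Finsupp.mem_support_iff.mp hM; rw [h']; exact h0
    · exact h'
  have hMN : M ≤ N := hNle M hM
  -- divisibility
  have hdvd1 : (p : ℤ) ^ (N - M + 1) ∣ b - τ M * (p : ℤ) ^ (N - M) := by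
    have : b - τ M * (p : ℤ) ^ (N - M)
        = ∑ n ∈ τ.support.erase M, τ n * (p : ℤ) ^ (N - n) := by
      rw [hbdef, ← Finset.add_sum_erase _ _ hM]
      ring
    rw [this]
    apply Finset.dvd_sum
    intro n hn
    have hnM : n < M := by
      have h1 := Finset.mem_of_mem_erase hn
      have h2 := Finset.ne_of_mem_erase hn
      have h3 : n ≤ M := Finset.le_max' _ _ h1
      omega
    exact Dvd.dvd.mul_left (pow_dvd_pow _ (by omega)) _
  have hdvd2 : (p : ℤ) ^ (N - M + 1) ∣ b := by
    rw [hb]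
    exact Dvd.dvd.mul_left (pow_dvd_pow _ (by omega)) _
  have hdvd3 : (p : ℤ) ^ (N - M + 1) ∣ τ M * (p : ℤ) ^ (N - M) := by
    have := hdvd2.sub hdvd1
    simpa using this
  have hdvd4 : (p : ℤ) ∣ τ M := by
    obtain ⟨k, hk⟩ := hdvd3
    refine ⟨k, ?_⟩
    have hpNM : ((p : ℤ) ^ (N - M)) ≠ 0 := by positivity
    apply mul_right_cancel₀ hpNM
    rw [hk, pow_succ]
    ring
  have hτM : τ M ≠ 0 := Finsupp.mem_support_iff.mp hM
  -- contradiction with the bound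
  obtain ⟨k, hk⟩ := hdvd4
  have hbdM := hbd M
  have hk0 : k ≠ 0 := by rintro rfl; simp at hk; exact hτM hk
  rcases lt_trichotomy k 0 with hk' | hk' | hk'
  · have h5 : (p : ℤ) * k ≤ (p : ℤ) * (-1) :=
      mul_le_mul_of_nonneg_left (by omega) (by omega)
    have h6 : (p : ℤ) * (-1) = -(p : ℤ) := by ring
    omega
  · exact hk0 hk'
  · have h5 : (p : ℤ) * 1 ≤ (p : ℤ) * k :=
      mul_le_mul_of_nonneg_left (by omega) (by omega)
    have h6 : (p : ℤ) * 1 = (p : ℤ) := by ring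
    omega

end Uniq
section Exist
variable {p : ℕ} {h : ℤ} (hh : 1 ≤ h) (hp : (p : ℤ) = 2 * h + 1)
include hh hp

lemma exists_canonical (s : Finset ℕ) (μ : ℕ → ℤ) (hs : ∀ k ∈ s, 1 ≤ k)
    (z : Prufer p) (hz : z = ∑ k ∈ s, μ k • eP p k) :
    ∃ σ' : ℕ →₀ ℤ, IsCanonical p z σ' ∧ σ'.support.card ≤ ∑ k ∈ s, (μ k).natAbs := by
  have hp0 : 0 < p := by omega
  set N := s.sup id with hNdef
  have hNle : ∀ k ∈ s, k ≤ N := fun k hk => Finset.le_sup (f := id) hk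
  set a : ℤ := ∑ k ∈ s, μ k * (p : ℤ) ^ (N - k) with hadef
  set f : ℕ → ℤ := fun n => if n ∈ Finset.Icc 1 N then digZ p a (N - n) else 0 with hfdef
  have hfsupp : ∀ n : ℕ, f n ≠ 0 → n ∈ Finset.Icc 1 N := by
    intro n hn
    by_contra hmem
    apply hn
    simp only [hfdef, if_neg hmem]
  set σ' : ℕ →₀ ℤ := Finsupp.onFinset (Finset.Icc 1 N) f hfsupp with hσdef
  have hσapp : ∀ n, σ' n = if n ∈ Finset.Icc 1 N then digZ p a (N - n) else 0 :=
    fun n => rfl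
  refine ⟨σ', ⟨⟨?_, ?_⟩, ?_⟩, ?_⟩
  · -- σ' 0 = 0
    rw [hσapp]
    simp
  · -- z is represented by σ'
    have hsubset : σ'.support ⊆ Finset.Icc 1 N := Finsupp.support_onFinset_subset
    have hext : (∑ n ∈ σ'.support, σ' n • eP p n : Prufer p)
        = ∑ n ∈ Finset.Icc 1 N, σ' n • eP p n := by
      apply Finset.sum_subset hsubset
      intro n _ hn
      rw [Finsupp.notMem_support_iff.mp hn, zero_smul]
    have hgoal : ((∑ k ∈ s, μ k • eP p k : Prufer p) : AddCircle (1 : ℚ))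
        = ((∑ n ∈ Finset.Icc 1 N, σ' n • eP p n : Prufer p) : AddCircle (1 : ℚ)) := by
      rw [coe_sum_eP, rat_sum_eq p hp0 s μ N hNle, ← hadef]
      have hσc : ∀ n ∈ Finset.Icc 1 N, σ' n = digZ p a (N - n) := by
        intro n hn
        rw [hσapp]
        exact if_pos hn
      have hsum2 : (∑ n ∈ Finset.Icc 1 N, σ' n • eP p n : Prufer p)
          = ∑ n ∈ Finset.Icc 1 N, (fun n => digZ p a (N - n)) n • eP p n :=
        Finset.sum_congr rfl (fun n hn => by rw [hσc n hn])
      rw [hsum2, coe_sum_eP p (Finset.Icc 1 N) (fun n => digZ p a (N - n)),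
        rat_sum_eq p hp0 _ _ N (fun n hn => (Finset.mem_Icc.mp hn).2)]
      -- now an identity of rationals mod ℤ
      have hre : ∑ n ∈ Finset.Icc 1 N, digZ p a (N - n) * (p : ℤ) ^ (N - n)
          = ∑ i ∈ Finset.range N, digZ p a i * (p : ℤ) ^ i := by
        apply Finset.sum_nbij' (fun n => N - n) (fun i => N - i)
        · intro n hn
          simp only [Finset.mem_Icc] at hn
          simp only [Finset.mem_range]
          omega
        · intro i hi
          simp only [Finset.mem_range] at hi
          simp only [Finset.mem_Icc]
          omega
        · intro n hn
          simp only [Finset.mem_Icc] at hn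
          omega
        · intro i hi
          simp only [Finset.mem_range] at hi
          omega
        · intro n hn
          rfl
      rw [hre]
      have htel := digZ_telescope p N a
      set R : ℤ := (shiftZ p)^[N] a with hRdef
      have hval : ((∑ i ∈ Finset.range N, digZ p a i * (p : ℤ) ^ i : ℤ) : ℚ)
          = (a : ℚ) - (R : ℚ) * (p : ℚ) ^ N := by
        have : (∑ i ∈ Finset.range N, digZ p a i * (p : ℤ) ^ i) = a - (p : ℤ) ^ N * R := by
          omega
        rw [this]
        push_cast
        ring
      rw [hval, ← sub_eq_zero, ← map_sub]
      have hpN : ((p : ℚ) ^ N) ≠ 0 := by positivity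
      have : (a : ℚ) / (p : ℚ) ^ N - ((a : ℚ) - (R : ℚ) * (p : ℚ) ^ N) / (p : ℚ) ^ N
          = ((R : ℤ) : ℚ) := by
        field_simp
        ring
      rw [this, phiQ_int]
    rw [hz, hext]
    exact Subtype.coe_injective hgoal
  · -- canonical bounds
    intro n
    rw [hσapp]
    split
    · have := balZ_abs_le hh hp ((shiftZ p)^[N - n] a)
      have hdig : digZ p a (N - n) = balZ p ((shiftZ p)^[N - n] a) := rfl
      rw [hdig]
      omega
    · simp
  · -- cardinality bound
    have hcard1 : σ'.support.card
        ≤ ((Finset.range N).filter (fun i => digZ p a i ≠ 0)).card := by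
      apply Finset.card_le_card_of_injOn (fun n => N - n)
      · intro n hn
        have hn2 : σ' n ≠ 0 := Finsupp.mem_support_iff.mp hn
        have hn3 : n ∈ Finset.Icc 1 N := hfsupp n hn2
        simp only [Finset.mem_Icc] at hn3
        simp only [Finset.mem_coe, Finset.mem_filter, Finset.mem_range]
        constructor
        · omega
        · rw [hσapp, if_pos (Finset.mem_Icc.mpr hn3)] at hn2
          exact hn2
      · intro n hn m hm hnm
        have hn3 := hfsupp n (Finsupp.mem_support_iff.mp hn)
        have hm3 := hfsupp m (Finsupp.mem_support_iff.mp hm)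
        simp only [Finset.mem_Icc] at hn3 hm3
        simp only at hnm
        omega
    calc σ'.support.card ≤ _ := hcard1
      _ ≤ wZ p a := digZ_count_le hh hp N a
      _ ≤ ∑ k ∈ s, (μ k).natAbs := wZ_sum hh hp s μ (fun k => N - k)

lemma canonical_unique (z : Prufer p) (σ σ' : ℕ →₀ ℤ)
    (h1 : IsCanonical p z σ) (h2 : IsCanonical p z σ') : σ = σ' := by
  obtain ⟨⟨h10, h1r⟩, h1b⟩ := h1
  obtain ⟨⟨h20, h2r⟩, h2b⟩ := h2
  have hτ : σ - σ' = 0 := by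
    apply rep_unique hh hp
    · rw [Finsupp.sub_apply, h10, h20, sub_zero]
    · intro n
      have := h1b n
      have := h2b n
      have habs : ((σ - σ') n).natAbs ≤ (σ n).natAbs + (σ' n).natAbs := by
        rw [Finsupp.sub_apply]
        exact Int.natAbs_sub_le _ _
      have hp3 : 3 ≤ p := by omega
      omega
    · have he : ∀ (τ : ℕ →₀ ℤ), (∑ n ∈ τ.support, τ n • eP p n : Prufer p)
          = τ.sum (fun n c => c • eP p n) := fun τ => rfl
      rw [he, Finsupp.sum_sub_index (fun n b₁ b₂ => sub_smul b₁ b₂ (eP p n)), ← he, ← he,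
        ← h1r, ← h2r, sub_self]
  have := sub_eq_zero.mp hτ
  exact this

end Exist


/-- If `z = μ₁ e_{n₁} + ⋯ + μ_h e_{n_h}` with nonzero `μᵢ` and `Σ|μᵢ| ≤ l`, then the canonical
form of `z` has at most `l` nonzero coefficients: `λ(z) ≤ l`. -/
theorem stmt10 (p : ℕ) (hp : p.Prime) (hodd : p ≠ 2) (l : ℕ)
    (s : Finset ℕ) (μ : ℕ → ℤ) (hs : ∀ k ∈ s, 1 ≤ k) (hμ : ∀ k ∈ s, μ k ≠ 0)
    (hsum : (∑ k ∈ s, (μ k).natAbs) ≤ l)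
    (z : Prufer p) (hz : z = ∑ k ∈ s, μ k • eP p k)
    (σ : ℕ →₀ ℤ) (hσ : IsCanonical p z σ) :
    σ.support.card ≤ l := by
  have hp2 := hp.two_le
  have hoddp : p % 2 = 1 := Nat.odd_iff.mp (hp.odd_of_ne_two hodd)
  have hh : (1 : ℤ) ≤ ((p / 2 : ℕ) : ℤ) := by omega
  have hpz : (p : ℤ) = 2 * ((p / 2 : ℕ) : ℤ) + 1 := by push_cast; omega
  obtain ⟨σ', hcan, hcard⟩ := exists_canonical hh hpz s μ hs z hz
  have heq := canonical_unique hh hpz z σ σ' hσ hcan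
  rw [heq]
  omega
end
end
end

section
/- Let p be an odd prime, m a nonzero integer, and l = ⌈log_p |m|⌉. If n > l, then m·e_n ≠ 0 in ℤ(p^∞) and the support of the canonical form of m·e_n is contained in {n−l, n−l+1, …, n}. -/
open Filter Topology

noncomputable section

lemma prufer_key (p : ℕ) (hp : 0 < p) (m : ℤ) (n : ℕ) (σ : ℕ →₀ ℤ)
    (hrep : m • eP p n = ∑ k ∈ σ.support, σ k • eP p k)
    (N : ℕ) (hNn : n ≤ N) (hNs : ∀ k ∈ σ.support, k ≤ N) :
    ∃ z : ℤ, m * (p:ℤ)^(N-n) = (∑ k ∈ σ.support, σ k * (p:ℤ)^(N-k)) + z * (p:ℤ)^N := by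
  have hp0 : (p:ℚ) ≠ 0 := by positivity
  set x : ℚ := (m : ℚ) * ((p:ℚ)^n)⁻¹ with hx
  set y : ℚ := ∑ k ∈ σ.support, (σ k : ℚ) * ((p:ℚ)^k)⁻¹ with hy
  have hval : (x : AddCircle (1:ℚ)) = (y : AddCircle (1:ℚ)) := by
    have h1 := congrArg (Subtype.val) hrep
    push_cast at h1
    have hfx : ∀ q : ℚ, (q : AddCircle (1:ℚ)) = QuotientAddGroup.mk' _ q := fun _ => rfl
    rw [hx, hy, hfx, hfx, map_sum]
    have heq : ∀ k ∈ σ.support, QuotientAddGroup.mk' (AddSubgroup.zmultiples (1:ℚ))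
        ((σ k : ℚ) * ((p:ℚ)^k)⁻¹) = σ k • (eP p k : AddCircle (1:ℚ)) := by
      intro k _
      rw [← zsmul_eq_mul, map_zsmul]
      rfl
    rw [Finset.sum_congr rfl heq, ← h1, ← zsmul_eq_mul, map_zsmul]
    rfl
  have hsub : ∃ z : ℤ, x - y = (z : ℚ) := by
    have h2 : ((x - y : ℚ) : AddCircle (1:ℚ)) = 0 := by
      have hfx : ∀ q : ℚ, (q : AddCircle (1:ℚ)) = QuotientAddGroup.mk' _ q := fun _ => rfl
      rw [hfx, map_sub, ← hfx, ← hfx, hval, sub_self]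
    rw [AddCircle.coe_eq_zero_iff] at h2
    obtain ⟨z, hz⟩ := h2
    exact ⟨z, by simpa using hz.symm⟩
  obtain ⟨z, hz⟩ := hsub
  refine ⟨z, ?_⟩
  have hmul := congrArg (· * (p:ℚ)^N) hz
  simp only [sub_mul, Finset.sum_mul, hx, hy] at hmul
  have hxN : (m : ℚ) * ((p:ℚ)^n)⁻¹ * (p:ℚ)^N = (m : ℚ) * (p:ℚ)^(N-n) := by
    have : (p:ℚ)^N = (p:ℚ)^n * (p:ℚ)^(N-n) := by
      rw [← pow_add, Nat.add_sub_cancel' hNn]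
    rw [this]; field_simp
  have hyN : ∀ k ∈ σ.support, (σ k : ℚ) * ((p:ℚ)^k)⁻¹ * (p:ℚ)^N = (σ k : ℚ) * (p:ℚ)^(N-k) := by
    intro k hk
    have : (p:ℚ)^N = (p:ℚ)^k * (p:ℚ)^(N-k) := by
      rw [← pow_add, Nat.add_sub_cancel' (hNs k hk)]
    rw [this]; field_simp
  rw [hxN, Finset.sum_congr rfl hyN] at hmul
  have : (m : ℚ) * (p:ℚ)^(N-n) = (∑ k ∈ σ.support, (σ k : ℚ) * (p:ℚ)^(N-k)) + (z : ℚ) * (p:ℚ)^N := by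
    linear_combination hmul
  exact_mod_cast this

lemma sum_pow_Icc (x : ℤ) (a b : ℕ) :
    ∑ k ∈ Finset.Icc (a+1) b, x^(b-k) = ∑ j ∈ Finset.range (b-a), x^j := by
  refine Finset.sum_nbij' (fun k => b - k) (fun j => b - j) ?_ ?_ ?_ ?_ ?_ <;>
    intros k hk <;> simp only [Finset.mem_Icc, Finset.mem_range] at * <;> omega

lemma tail_bound (p n a : ℕ) (hp1 : 1 < p) (σ : ℕ →₀ ℤ) (hb : ∀ k, 2 * (σ k).natAbs ≤ p - 1)
    (t : Finset ℕ) (ht : t ⊆ Finset.Icc (a+1) n) :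
    2 * |∑ k ∈ t, σ k * (p:ℤ)^(n-k)| ≤ (p:ℤ)^(n-a) - 1 := by
  have hcast : ((p - 1 : ℕ) : ℤ) = (p:ℤ) - 1 := by
    have : 1 ≤ p := hp1.le
    push_cast [this]; ring
  have h1 : 2 * |∑ k ∈ t, σ k * (p:ℤ)^(n-k)| ≤ ∑ k ∈ t, ((p:ℤ)-1) * (p:ℤ)^(n-k) := by
    calc 2 * |∑ k ∈ t, σ k * (p:ℤ)^(n-k)| ≤ 2 * ∑ k ∈ t, |σ k * (p:ℤ)^(n-k)| := by
          have := Finset.abs_sum_le_sum_abs (fun k => σ k * (p:ℤ)^(n-k)) t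
          linarith
      _ = ∑ k ∈ t, (2 * |σ k|) * (p:ℤ)^(n-k) := by
          rw [Finset.mul_sum]
          refine Finset.sum_congr rfl fun k _ => ?_
          rw [abs_mul, abs_of_nonneg (by positivity : (0:ℤ) ≤ (p:ℤ)^(n-k))]; ring
      _ ≤ ∑ k ∈ t, ((p:ℤ)-1) * (p:ℤ)^(n-k) := by
          refine Finset.sum_le_sum fun k _ => ?_
          have h2 : (2 * (σ k).natAbs : ℤ) ≤ ((p - 1 : ℕ) : ℤ) := by exact_mod_cast hb k
          rw [hcast] at h2
          have h3 : (2 * |σ k|) ≤ (p:ℤ) - 1 := by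
            rwa [Int.abs_eq_natAbs]; 
          have : (0:ℤ) ≤ (p:ℤ)^(n-k) := by positivity
          exact mul_le_mul_of_nonneg_right h3 this
  have h2 : ∑ k ∈ t, ((p:ℤ)-1) * (p:ℤ)^(n-k) ≤ ∑ k ∈ Finset.Icc (a+1) n, ((p:ℤ)-1) * (p:ℤ)^(n-k) := by
    refine Finset.sum_le_sum_of_subset_of_nonneg ht fun k _ _ => ?_
    have : (0:ℤ) ≤ (p:ℤ)^(n-k) := by positivity
    have : (0:ℤ) ≤ (p:ℤ) - 1 := by
      have : (1:ℤ) ≤ (p:ℤ) := by exact_mod_cast hp1.le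
      linarith
    positivity
  have h3 : ∑ k ∈ Finset.Icc (a+1) n, ((p:ℤ)-1) * (p:ℤ)^(n-k) = (p:ℤ)^(n-a) - 1 := by
    rw [← Finset.mul_sum, sum_pow_Icc, mul_comm, geom_sum_mul]
  linarith

set_option maxHeartbeats 1000000 in
/-- For a nonzero integer `m` with `l = ⌈log_p |m|⌉ < n`, `m • e_n ≠ 0` and the canonical
support of `m • e_n` is contained in `{n-l, …, n}`. -/
theorem stmt11 (p : ℕ) (hp : p.Prime) (hodd : p ≠ 2) (m : ℤ) (hm : m ≠ 0)
    (l n : ℕ) (hl : l = Nat.clog p m.natAbs) (hn : l < n)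
    (σ : ℕ →₀ ℤ) (hσ : IsCanonical p (m • eP p n) σ) :
    m • eP p n ≠ 0 ∧ σ.support ⊆ Finset.Icc (n - l) n := by
  obtain ⟨⟨h0, hrep⟩, hbound⟩ := hσ
  have hp1 : 1 < p := hp.one_lt
  have hp3 : 3 ≤ p := by have := hp.two_le; omega
  have hp3Z : (3:ℤ) ≤ (p:ℤ) := by exact_mod_cast hp3
  have hml : m.natAbs ≤ p ^ l := hl ▸ Nat.le_pow_clog hp1 _
  have hmlZ : |m| ≤ (p:ℤ)^l := by
    rw [Int.abs_eq_natAbs]; exact_mod_cast hml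
  constructor
  · intro hzero
    obtain ⟨z, hz⟩ := prufer_key p hp.pos m n 0 (by simp [hzero]) n le_rfl (by simp)
    simp [Nat.sub_self] at hz
    -- hz : m = z * p^n
    have hz0 : z ≠ 0 := fun h => hm (by simp [h] at hz; exact hz)
    have h1 : (p:ℤ)^n ≤ |m| := by
      rw [hz]
      calc (p:ℤ)^n ≤ |z| * (p:ℤ)^n := by
            have : (1:ℤ) ≤ |z| := Int.one_le_abs hz0
            nlinarith [pow_pos (by linarith : (0:ℤ) < (p:ℤ)) n]
        _ = |z * (p:ℤ)^n| := by
            rw [abs_mul, abs_of_nonneg (by positivity : (0:ℤ) ≤ (p:ℤ)^n)]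
    have h2 : (p:ℤ)^l < (p:ℤ)^n := by
      have := pow_lt_pow_right₀ (by linarith : (1:ℤ) < (p:ℤ)) hn
      exact this
    linarith
  · -- support upper bound
    have hub : ∀ k ∈ σ.support, k ≤ n := by
      by_contra h
      push_neg at h
      obtain ⟨k₀, hk₀, hk₀n⟩ := h
      have hne : σ.support.Nonempty := ⟨k₀, hk₀⟩
      set N := σ.support.max' hne with hN
      have hNmem : N ∈ σ.support := Finset.max'_mem _ _
      have hNk₀ : k₀ ≤ N := Finset.le_max' _ _ hk₀
      have hNn : n < N := lt_of_lt_of_le hk₀n hNk₀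
      obtain ⟨z, hz⟩ := prufer_key p hp.pos m n σ hrep N hNn.le
        (fun k hk => Finset.le_max' _ _ hk)
      have hsplit : ∑ k ∈ σ.support, σ k * (p:ℤ)^(N-k)
          = σ N + ∑ k ∈ σ.support.erase N, σ k * (p:ℤ)^(N-k) := by
        rw [← Finset.add_sum_erase _ _ hNmem, Nat.sub_self, pow_zero, mul_one]
      have hdvd : (p:ℤ) ∣ σ N := by
        have heq : σ N = m * (p:ℤ)^(N-n) - z * (p:ℤ)^N
            - ∑ k ∈ σ.support.erase N, σ k * (p:ℤ)^(N-k) := by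
          rw [hsplit] at hz; linarith
        rw [heq]
        refine dvd_sub (dvd_sub ?_ ?_) ?_
        · exact Dvd.dvd.mul_left (dvd_pow_self _ (by omega : N - n ≠ 0)) _
        · exact Dvd.dvd.mul_left (dvd_pow_self _ (by omega : N ≠ 0)) _
        · refine Finset.dvd_sum fun k hk => ?_
          have hkN : k < N := lt_of_le_of_ne (Finset.le_max' _ _ (Finset.mem_of_mem_erase hk))
            (Finset.ne_of_mem_erase hk)
          exact Dvd.dvd.mul_left (dvd_pow_self _ (by omega : N - k ≠ 0)) _
      have hne0 : σ N ≠ 0 := Finsupp.mem_support_iff.mp hNmem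
      have hple : p ≤ (σ N).natAbs := by
        refine Nat.le_of_dvd (Int.natAbs_pos.mpr hne0) ?_
        exact Int.natCast_dvd.mp hdvd
      have := hbound N
      omega
    refine fun x hx => Finset.mem_Icc.mpr ⟨?_, hub x hx⟩
    by_contra hlb
    push_neg at hlb
    -- hlb : x < n - l
    have hne : σ.support.Nonempty := ⟨x, hx⟩
    set K := σ.support.min' hne with hK
    have hKmem : K ∈ σ.support := Finset.min'_mem _ _
    have hKx : K ≤ x := Finset.min'_le _ _ hx
    have hKl : K + l + 1 ≤ n := by omega
    obtain ⟨z, hz⟩ := prufer_key p hp.pos m n σ hrep n le_rfl hub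
    rw [Nat.sub_self, pow_zero, mul_one] at hz
    -- hz : m = S + z * p^n
    -- z = 0
    have hsupIcc : σ.support ⊆ Finset.Icc (0+1) n := by
      intro k hk
      simp only [Finset.mem_Icc]
      have : k ≠ 0 := fun h => (Finsupp.mem_support_iff.mp hk) (h ▸ h0)
      exact ⟨by omega, hub k hk⟩
    have hS := tail_bound p n 0 hp1 σ hbound σ.support hsupIcc
    rw [Nat.sub_zero] at hS
    have hpn1 : (p:ℤ)^l ≤ (p:ℤ)^(n-1) := pow_le_pow_right₀ (by linarith) (by omega)
    have hpn2 : 3 * (p:ℤ)^(n-1) ≤ (p:ℤ)^n := by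
      have : (p:ℤ)^n = (p:ℤ) * (p:ℤ)^(n-1) := by
        rw [← pow_succ']
        congr 1
        omega
      rw [this]
      have : (0:ℤ) ≤ (p:ℤ)^(n-1) := by positivity
      nlinarith
    have hpn0 : (0:ℤ) ≤ (p:ℤ)^(n-1) := by positivity
    have hz0 : z = 0 := by
      by_contra hz0
      have h1 : (1:ℤ) ≤ |z| := Int.one_le_abs hz0
      have h2 : (p:ℤ)^n ≤ |z * (p:ℤ)^n| := by
        rw [abs_mul, abs_of_nonneg (by positivity : (0:ℤ) ≤ (p:ℤ)^n)]
        nlinarith [pow_pos (by linarith : (0:ℤ) < (p:ℤ)) n]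
      have h3 : z * (p:ℤ)^n = m - ∑ k ∈ σ.support, σ k * (p:ℤ)^(n-k) := by linarith
      rw [h3] at h2
      have h4 : |m - ∑ k ∈ σ.support, σ k * (p:ℤ)^(n-k)|
          ≤ |m| + |∑ k ∈ σ.support, σ k * (p:ℤ)^(n-k)| := abs_sub _ _
      linarith
    rw [hz0, zero_mul, add_zero] at hz
    -- hz : m = S ; now lower bound contradiction
    have hsplit : ∑ k ∈ σ.support, σ k * (p:ℤ)^(n-k)
        = σ K * (p:ℤ)^(n-K) + ∑ k ∈ σ.support.erase K, σ k * (p:ℤ)^(n-k) :=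
      (Finset.add_sum_erase _ _ hKmem).symm
    have hT := tail_bound p n K hp1 σ hbound (σ.support.erase K) (by
      intro k hk
      simp only [Finset.mem_Icc]
      have h1 : K ≤ k := Finset.min'_le _ _ (Finset.mem_of_mem_erase hk)
      have h2 : k ≠ K := Finset.ne_of_mem_erase hk
      exact ⟨by omega, hub k (Finset.mem_of_mem_erase hk)⟩)
    have hσK : (1:ℤ) ≤ |σ K| := Int.one_le_abs (Finsupp.mem_support_iff.mp hKmem)
    have hhead : (p:ℤ)^(n-K) ≤ |σ K * (p:ℤ)^(n-K)| := by
      rw [abs_mul, abs_of_nonneg (by positivity : (0:ℤ) ≤ (p:ℤ)^(n-K))]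
      exact le_mul_of_one_le_left (by positivity) hσK
    have habs : |σ K * (p:ℤ)^(n-K)| ≤ |m| + |∑ k ∈ σ.support.erase K, σ k * (p:ℤ)^(n-k)| := by
      have : σ K * (p:ℤ)^(n-K) = m - ∑ k ∈ σ.support.erase K, σ k * (p:ℤ)^(n-k) := by
        rw [hz, hsplit]; ring
      rw [this]
      exact abs_sub _ _
    have hpow : 3 * (p:ℤ)^l ≤ (p:ℤ)^(n-K) := by
      have h1 : (p:ℤ)^(l+1) ≤ (p:ℤ)^(n-K) := pow_le_pow_right₀ (by linarith) (by omega)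
      have h2 : (p:ℤ)^(l+1) = (p:ℤ) * (p:ℤ)^l := by rw [pow_succ']
      have : (0:ℤ) ≤ (p:ℤ)^l := by positivity
      nlinarith
    have hpl : (1:ℤ) ≤ (p:ℤ)^l := one_le_pow₀ (by linarith)
    linarith
end
end

section
/- Let p be an odd prime and y, z ∈ ℤ(p^∞) with λ(y) > λ(z). If Λ(y) = {k₁ < k₂ < ⋯ < k_g} where g = λ(y), then the order of y + z is at least p^{k_{g−λ(z)}}. -/
open Filter Topology

noncomputable section

private lemma sum_pow_bound (p : ℤ) (hp : 2 ≤ p) (T : Finset ℕ) (c : ℕ → ℤ)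
    (N a : ℕ) (hT : ∀ n ∈ T, a ≤ n ∧ n ≤ N) (hc : ∀ n, |c n| ≤ p - 1) :
    |∑ n ∈ T, c n * p ^ (N - n)| ≤ p ^ (N - a + 1) - 1 := by
  have hp0 : (0:ℤ) ≤ p := by omega
  calc |∑ n ∈ T, c n * p ^ (N - n)| ≤ ∑ n ∈ T, |c n * p ^ (N - n)| :=
        Finset.abs_sum_le_sum_abs _ _
    _ ≤ ∑ n ∈ T, (p - 1) * p ^ (N - n) := by
        refine Finset.sum_le_sum fun n hn => ?_
        rw [abs_mul, abs_pow, abs_of_nonneg hp0]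
        exact mul_le_mul_of_nonneg_right (hc n) (pow_nonneg hp0 _)
    _ = ∑ i ∈ T.image (fun n => N - n), (p - 1) * p ^ i := by
        rw [Finset.sum_image]
        intro x hx y hy hxy
        have := hT x hx; have := hT y hy
        simp only at hxy
        omega
    _ ≤ ∑ i ∈ Finset.range (N - a + 1), (p - 1) * p ^ i := by
        refine Finset.sum_le_sum_of_subset_of_nonneg ?_ fun i _ _ =>
          mul_nonneg (by omega) (pow_nonneg hp0 _)
        intro i hi
        simp only [Finset.mem_image] at hi
        obtain ⟨n, hn, rfl⟩ := hi
        have := hT n hn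
        simp only [Finset.mem_range]
        omega
    _ = p ^ (N - a + 1) - 1 := by
        rw [← Finset.mul_sum, mul_comm, geom_sum_mul]

/-- If `λ(y) > λ(z)` and `Λ(y) = {k₁ < ⋯ < k_g}` with `g = λ(y)`, then
`o(y + z) ≥ p^{k_{g - λ(z)}}`. -/
theorem stmt12 (p : ℕ) (hp : p.Prime) (hodd : p ≠ 2) (y z : Prufer p)
    (σ τ : ℕ →₀ ℤ) (hσ : IsCanonical p y σ) (hτ : IsCanonical p z τ)
    (hlt : τ.support.card < σ.support.card) :
    p ^ ((σ.support.orderIsoOfFin rfl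
        ⟨σ.support.card - τ.support.card - 1, by omega⟩ : ℕ)) ≤ addOrderOf (y + z) := by
  classical
  obtain ⟨⟨hσ0, hσrep⟩, hσb⟩ := hσ
  obtain ⟨⟨hτ0, hτrep⟩, hτb⟩ := hτ
  have hp2 : 2 ≤ p := hp.two_le
  have hpz2 : (2:ℤ) ≤ (p:ℤ) := by exact_mod_cast hp2
  have hp0 : ((p:ℚ)) ≠ 0 := by
    simpa using hp.ne_zero
  set e := σ.support.orderIsoOfFin rfl with he
  set i : Fin σ.support.card := ⟨σ.support.card - τ.support.card - 1, by omega⟩ with hi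
  show p ^ ((e i : ℕ)) ≤ addOrderOf (y + z)
  set K : ℕ := (e i : ℕ) with hK
  have hKmem : K ∈ σ.support := (e i).2
  have hK1 : 1 ≤ K := by
    rcases Nat.eq_zero_or_pos K with h0 | h
    · rw [h0] at hKmem; simp [Finsupp.mem_support_iff, hσ0] at hKmem
    · exact h
  -- number of support elements below K
  have hcard_lt : (σ.support.filter (· < K)).card = σ.support.card - τ.support.card - 1 := by
    have himg : σ.support.filter (· < K) =
        (Finset.Iio i).image (fun j => ((e j : σ.support) : ℕ)) := by
      ext x
      simp only [Finset.mem_filter, Finset.mem_image, Finset.mem_Iio]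
      constructor
      · rintro ⟨hx, hxK⟩
        refine ⟨e.symm ⟨x, hx⟩, ?_, by simp⟩
        rw [← e.lt_iff_lt (x := e.symm ⟨x, hx⟩) (y := i), e.apply_symm_apply, ← Subtype.coe_lt_coe]
        exact hxK
      · rintro ⟨j, hj, rfl⟩
        exact ⟨(e j).2, Subtype.coe_lt_coe.2 (e.lt_iff_lt.2 hj)⟩
    rw [himg, Finset.card_image_of_injective _
      (fun a b hab => e.injective (Subtype.ext hab)), Fin.card_Iio]
  have hcard_ge : (σ.support.filter (fun n => K ≤ n)).card = τ.support.card + 1 := by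
    have h2 := Finset.card_filter_add_card_filter_not (s := σ.support) (p := (· < K))
    have h3 : σ.support.filter (fun a => ¬ a < K) = σ.support.filter (fun n => K ≤ n) := by
      apply Finset.filter_congr; intro n _; simp [not_lt]
    rw [h3] at h2
    omega
  -- find n₀ ≥ K in σ.support but not in τ.support
  obtain ⟨n₀, hn₀m, hn₀t⟩ : ∃ n₀ ∈ σ.support.filter (fun n => K ≤ n), n₀ ∉ τ.support := by
    rw [← Finset.not_subset]
    intro hsub
    have := Finset.card_le_card hsub
    omega
  rw [Finset.mem_filter] at hn₀m
  obtain ⟨hn₀σ, hn₀K⟩ := hn₀m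
  have hτn₀ : τ n₀ = 0 := Finsupp.notMem_support_iff.1 hn₀t
  have hσn₀ : σ n₀ ≠ 0 := Finsupp.mem_support_iff.1 hn₀σ
  -- digit bound
  have hδb : ∀ n, |σ n + τ n| ≤ (p:ℤ) - 1 := by
    intro n
    have h1 := hσb n
    have h2 := hτb n
    have hn : (σ n).natAbs + (τ n).natAbs ≤ p - 1 := by omega
    calc |σ n + τ n| ≤ |σ n| + |τ n| := abs_add_le _ _
      _ = (((σ n).natAbs + (τ n).natAbs : ℕ) : ℤ) := by
          rw [Int.abs_eq_natAbs, Int.abs_eq_natAbs]; push_cast; ring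
      _ ≤ ((p - 1 : ℕ) : ℤ) := by exact_mod_cast hn
      _ = (p:ℤ) - 1 := by
          rw [Nat.cast_sub hp.one_lt.le]; simp
  -- the quotient map as a hom
  set φ : ℚ →+ AddCircle (1:ℚ) := QuotientAddGroup.mk' (AddSubgroup.zmultiples (1:ℚ)) with hφdef
  set S : Prufer p →+ AddCircle (1:ℚ) := (Prufer p).subtype with hSdef
  set q1 : ℚ := ∑ n ∈ σ.support, σ n • ((p:ℚ)^n)⁻¹ with hq1
  set q2 : ℚ := ∑ n ∈ τ.support, τ n • ((p:ℚ)^n)⁻¹ with hq2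
  have hy : S y = φ q1 := by
    rw [hσrep, map_sum, hq1, map_sum]
    refine Finset.sum_congr rfl fun n _ => ?_
    rw [map_zsmul, map_zsmul]
    rfl
  have hz : S z = φ q2 := by
    rw [hτrep, map_sum, hq2, map_sum]
    refine Finset.sum_congr rfl fun n _ => ?_
    rw [map_zsmul, map_zsmul]
    rfl
  set u : Finset ℕ := σ.support ∪ τ.support with hu
  set Q : ℚ := ∑ n ∈ u, ((σ n + τ n : ℤ) : ℚ) * ((p:ℚ)^n)⁻¹ with hQ
  have hq12 : q1 + q2 = Q := by
    rw [hq1, hq2, hQ,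
      Finset.sum_subset (Finset.subset_union_left (s₁ := σ.support) (s₂ := τ.support))
        (fun x _ hx => by simp [Finsupp.notMem_support_iff.1 hx]),
      Finset.sum_subset (Finset.subset_union_right (s₁ := σ.support) (s₂ := τ.support))
        (fun x _ hx => by simp [Finsupp.notMem_support_iff.1 hx]),
      ← Finset.sum_add_distrib]
    refine Finset.sum_congr rfl fun n _ => ?_
    rw [zsmul_eq_mul, zsmul_eq_mul]
    push_cast
    ring
  -- reduce to nonvanishing of p^(K-1) • (y+z)
  suffices hne : p ^ (K - 1) • (y + z) ≠ 0 by
    by_contra hcon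
    push_neg at hcon
    obtain ⟨nb, hnb⟩ := (y + z).2
    have hdvd : addOrderOf (y + z) ∣ p ^ nb := by
      apply addOrderOf_dvd_of_nsmul_eq_zero
      apply Subtype.ext
      simpa using hnb
    obtain ⟨j, hjle, hje⟩ := (Nat.dvd_prime_pow hp).1 hdvd
    have hjK : j < K := by
      by_contra hj
      push_neg at hj
      have : p ^ K ≤ p ^ j := Nat.pow_le_pow_right hp.pos hj
      omega
    apply hne
    have h0 : p ^ j • (y + z) = 0 := by rw [← hje]; exact addOrderOf_nsmul_eq_zero _
    have hKe : p ^ (K - 1) = p ^ (K - 1 - j) * p ^ j := by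
      rw [← pow_add]; congr 1; omega
    rw [hKe, mul_smul, h0, smul_zero]
  -- now the analytic core
  intro h0
  have hval : (0 : AddCircle (1:ℚ)) = φ ((p:ℚ) ^ (K-1) * Q) := by
    have h1 : S (p ^ (K - 1) • (y + z)) = 0 := by rw [h0, map_zero]
    rw [map_nsmul, map_add, hy, hz, ← map_add, hq12, ← map_nsmul] at h1
    rw [← h1]
    congr 1
    rw [nsmul_eq_mul]
    push_cast
    ring
  obtain ⟨c, hc⟩ : ∃ c : ℤ, (c : ℚ) = (p:ℚ) ^ (K-1) * Q := by
    have h2 : ((p:ℚ) ^ (K-1) * Q) ∈ AddSubgroup.zmultiples (1:ℚ) := by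
      rw [← QuotientAddGroup.eq_zero_iff]
      exact hval.symm
    obtain ⟨k, hk⟩ := AddSubgroup.mem_zmultiples_iff.1 h2
    exact ⟨k, by simpa using hk⟩
  -- split the sum at K
  set f : ℕ → ℚ := fun n => ((σ n + τ n : ℤ) : ℚ) * ((p:ℚ)^(K-1) / (p:ℚ)^n) with hf
  have hsplit : (p:ℚ) ^ (K-1) * Q = ∑ n ∈ u, f n := by
    rw [hQ, Finset.mul_sum]
    refine Finset.sum_congr rfl fun n _ => ?_
    rw [hf]; ring
  set H : Finset ℕ := u.filter (fun n => K ≤ n) with hHdef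
  set Gl : Finset ℕ := u.filter (fun n => ¬ K ≤ n) with hGl
  set F : Finset ℕ := H.filter (fun n => σ n + τ n ≠ 0) with hFdef
  have hsum_split : ∑ n ∈ u, f n = ∑ n ∈ F, f n + ∑ n ∈ Gl, f n := by
    rw [← Finset.sum_filter_add_sum_filter_not u (fun n => K ≤ n) f]
    congr 1
    refine (Finset.sum_subset (Finset.filter_subset _ _) fun x hx hx' => ?_).symm
    have : σ x + τ x = 0 := by
      by_contra hne'
      exact hx' (Finset.mem_filter.2 ⟨hx, hne'⟩)
    simp only [hf]
    simp [this]
  set L : ℤ := ∑ n ∈ Gl, (σ n + τ n) * (p:ℤ)^(K-1-n) with hL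
  have hGlval : ∑ n ∈ Gl, f n = (L : ℚ) := by
    rw [hL, Int.cast_sum]
    refine Finset.sum_congr rfl fun n hn => ?_
    have hnK : ¬ K ≤ n := (Finset.mem_filter.1 hn).2
    have hpp : (p:ℚ)^(K-1) / (p:ℚ)^n = (p:ℚ)^(K-1-n) := by
      rw [div_eq_iff (pow_ne_zero n hp0), ← pow_add]
      congr 1
      omega
    simp only [hf]
    rw [hpp]
    push_cast
    ring
  -- F is nonempty
  have hn₀F : n₀ ∈ F := by
    refine Finset.mem_filter.2 ⟨Finset.mem_filter.2 ⟨Finset.mem_union_left _ hn₀σ, hn₀K⟩, ?_⟩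
    rw [hτn₀, add_zero]
    exact hσn₀
  have hFne : F.Nonempty := ⟨n₀, hn₀F⟩
  set N : ℕ := F.max' hFne with hN
  set m : ℕ := F.min' hFne with hm
  have hmF : m ∈ F := F.min'_mem hFne
  have hFprop : ∀ n ∈ F, K ≤ n ∧ n ≤ N := fun n hn =>
    ⟨(Finset.mem_filter.1 ((Finset.mem_filter.1 hn).1)).2, F.le_max' n hn⟩
  have hKm : K ≤ m := (hFprop m hmF).1
  have hmN : m ≤ N := (hFprop m hmF).2
  have hδm : σ m + τ m ≠ 0 := (Finset.mem_filter.1 hmF).2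
  set M : ℤ := ∑ n ∈ F, (σ n + τ n) * (p:ℤ)^(N-n) with hM
  -- relate M and the F-sum
  have hMQ : (∑ n ∈ F, f n) * (p:ℚ)^(N-K+1) = (M : ℚ) := by
    rw [Finset.sum_mul, hM, Int.cast_sum]
    refine Finset.sum_congr rfl fun n hn => ?_
    have hn' := hFprop n hn
    have hpp : (p:ℚ)^(K-1) / (p:ℚ)^n * (p:ℚ)^(N-K+1) = (p:ℚ)^(N-n) := by
      rw [div_mul_eq_mul_div, ← pow_add, div_eq_iff (pow_ne_zero n hp0), ← pow_add]
      congr 1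
      omega
    simp only [hf]
    rw [mul_assoc, hpp]
    push_cast
    ring
  -- M is nonzero
  have hMne : M ≠ 0 := by
    intro hM0
    have hhead : (σ m + τ m) * (p:ℤ)^(N-m) + ∑ n ∈ F.erase m, (σ n + τ n) * (p:ℤ)^(N-n) = M := by
      rw [hM]; exact Finset.add_sum_erase F (fun n => (σ n + τ n) * (p:ℤ)^(N-n)) hmF
    have htail : |∑ n ∈ F.erase m, (σ n + τ n) * (p:ℤ)^(N-n)| ≤ (p:ℤ)^(N-m) - 1 := by
      rcases eq_or_lt_of_le hmN with hmN' | hmN'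
      · have hempty : F.erase m = ∅ := by
          apply Finset.eq_empty_of_forall_notMem
          intro x hx
          have hx1 := Finset.ne_of_mem_erase hx
          have hx2 := Finset.mem_of_mem_erase hx
          have := hFprop x hx2
          have := F.min'_le x hx2
          omega
        rw [hempty]
        simp only [Finset.sum_empty, abs_zero]
        have : (1:ℤ) ≤ (p:ℤ)^(N-m) := one_le_pow₀ (by omega : (1:ℤ) ≤ (p:ℤ))
        omega
      · have hb := sum_pow_bound (p:ℤ) hpz2 (F.erase m) (fun n => σ n + τ n) N (m+1)
          (fun n hn => by
            have hx1 := Finset.ne_of_mem_erase hn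
            have hx2 := Finset.mem_of_mem_erase hn
            have := hFprop n hx2
            have := F.min'_le n hx2
            omega)
          hδb
        have hexp : N - (m+1) + 1 = N - m := by omega
        rwa [hexp] at hb
    have hheadabs : (p:ℤ)^(N-m) ≤ |(σ m + τ m) * (p:ℤ)^(N-m)| := by
      rw [abs_mul, abs_pow, abs_of_nonneg (show (0:ℤ) ≤ (p:ℤ) by omega)]
      exact le_mul_of_one_le_left (pow_nonneg (by omega) _) (Int.one_le_abs hδm)
    have heq : (σ m + τ m) * (p:ℤ)^(N-m) = - ∑ n ∈ F.erase m, (σ n + τ n) * (p:ℤ)^(N-n) := by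
      rw [hM0] at hhead
      linarith
    rw [heq, abs_neg] at hheadabs
    omega
  -- M bound
  have hMbound : |M| ≤ (p:ℤ)^(N-m+1) - 1 := by
    rw [hM]
    exact sum_pow_bound (p:ℤ) hpz2 F (fun n => σ n + τ n) N m
      (fun n hn => ⟨F.min'_le n hn, (hFprop n hn).2⟩) hδb
  have hpowle : (p:ℤ)^(N-m+1) ≤ (p:ℤ)^(N-K+1) :=
    pow_le_pow_right₀ (by omega) (by omega)
  -- derive contradiction
  have hFQ : ∑ n ∈ F, f n = ((c - L : ℤ) : ℚ) := by
    push_cast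
    have := hc
    rw [hsplit, hsum_split, hGlval] at this
    linarith
  have hMeq : (M : ℚ) = (((c - L) * (p:ℤ)^(N-K+1) : ℤ) : ℚ) := by
    rw [← hMQ, hFQ]
    push_cast
    ring
  have hMint : M = (c - L) * (p:ℤ)^(N-K+1) := by exact_mod_cast hMeq
  rcases eq_or_ne (c - L) 0 with hcl | hcl
  · rw [hcl, zero_mul] at hMint
    exact hMne hMint
  · have h1 : (p:ℤ)^(N-K+1) ≤ |M| := by
      rw [hMint, abs_mul, abs_pow, abs_of_nonneg (show (0:ℤ) ≤ (p:ℤ) by omega)]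
      exact le_mul_of_one_le_left (pow_nonneg (by omega) _) (Int.one_le_abs hcl)
    omega
end
end

section
/- Let p be an odd prime, y = ν₁ e_{n₁} + ⋯ + ν_f e_{n_f} ∈ ℤ(p^∞) with n₁ < ⋯ < n_f, nonzero integer coefficients ν_i, l_i = ⌈log_p |ν_i|⌉ and n_i < n_{i+1} − l_{i+1} for each i. If z ∈ ℤ(p^∞) satisfies λ(z) < λ(y), then the order of y + z is at least p^{n_{f−λ(z)} − l_{f−λ(z)}}. -/
open Filter Topology

noncomputable section

/-! ### Auxiliary machinery: balanced base-`p` digits -/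

def bdigit (p : ℕ) (m : ℤ) : ℤ := if 2 * (m % p) ≤ p - 1 then m % p else m % p - p
def bstep (p : ℕ) (m : ℤ) : ℤ := (m - bdigit p m) / p
def bdig (p : ℕ) (m : ℤ) (k : ℕ) : ℤ := bdigit p ((bstep p)^[k] m)

section Digits
variable {p : ℕ}

lemma bdigit_bound (hp : 3 ≤ p) (hodd : Odd p) (m : ℤ) : 2 * (bdigit p m).natAbs ≤ p - 1 := by
  have hp0 : (0:ℤ) < p := by exact_mod_cast Nat.lt_of_lt_of_le (by norm_num) hp
  have h1 : 0 ≤ m % p := Int.emod_nonneg m (by positivity)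
  have h2 : m % p < p := Int.emod_lt_of_pos m hp0
  obtain ⟨c, hc⟩ := hodd
  unfold bdigit
  split_ifs with h
  · zify [hp] ; rw [abs_of_nonneg h1]; omega
  · zify [hp]
    rw [abs_of_nonpos (by omega)]
    have : (p:ℤ) = 2*c+1 := by exact_mod_cast hc
    omega

lemma bdigit_dvd (m : ℤ) : (p:ℤ) ∣ m - bdigit p m := by
  unfold bdigit; split_ifs with h
  · simpa using Int.dvd_self_sub_of_emod_eq rfl
  · have : m - (m % p - p) = (m - m % p) + p := by ring
    rw [this]
    exact dvd_add (Int.dvd_self_sub_of_emod_eq rfl) dvd_rfl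

lemma bstep_spec (m : ℤ) : m = bdigit p m + p * bstep p m := by
  have := bdigit_dvd (p := p) m
  unfold bstep
  rw [Int.mul_ediv_cancel' this]
  ring

lemma bdigit_small (hp : 3 ≤ p) (hodd : Odd p) {m : ℤ} (h : 2 * |m| ≤ (p:ℤ) - 1) :
    bdigit p m = m := by
  have hp0 : (0:ℤ) < p := by exact_mod_cast Nat.lt_of_lt_of_le (by norm_num) hp
  obtain ⟨c, hc⟩ := hodd
  have hc' : (p:ℤ) = 2*c+1 := by exact_mod_cast hc
  rcases le_or_gt 0 m with h0 | h0
  · rw [abs_of_nonneg h0] at h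
    have hm : m % p = m := Int.emod_eq_of_lt h0 (by omega)
    unfold bdigit
    rw [hm]
    split_ifs with h2 <;> omega
  · rw [abs_of_neg h0] at h
    have hm : m % p = m + p := by
      have h1 : (m + p * 1) % p = m % p := Int.add_mul_emod_self_left (a := m) (b := p) (c := 1)
      have h2 : (m + p * 1) % p = m + p * 1 := Int.emod_eq_of_lt (by omega) (by omega)
      omega
    unfold bdigit
    rw [hm]
    split_ifs with h2 <;> omega

lemma bstep_small (hp : 3 ≤ p) (hodd : Odd p) {m : ℤ} (h : 2 * |m| ≤ (p:ℤ) - 1) :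
    bstep p m = 0 := by
  unfold bstep
  rw [bdigit_small hp hodd h]
  simp

lemma bstep_zero (hp : 3 ≤ p) (hodd : Odd p) : bstep p 0 = 0 :=
  bstep_small hp hodd (by
    have h3 : (3:ℤ) ≤ p := by exact_mod_cast hp
    rw [abs_zero, mul_zero]; omega)

lemma bstep_iter_zero' (hp : 3 ≤ p) (hodd : Odd p) (r : ℕ) : (bstep p)^[r] (0:ℤ) = 0 := by
  induction r with
  | zero => rfl
  | succ r ih => rw [Function.iterate_succ_apply', ih, bstep_zero hp hodd]

lemma bstep_bound (hp : 3 ≤ p) (hodd : Odd p) {m : ℤ} {l : ℕ} (h : |m| ≤ (p:ℤ)^(l+1)) :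
    |bstep p m| ≤ (p:ℤ)^l := by
  have hp0 : (0:ℤ) < p := by exact_mod_cast Nat.lt_of_lt_of_le (by norm_num) hp
  have hd := bdigit_bound hp hodd m
  have hd' : 2 * |bdigit p m| ≤ (p:ℤ) - 1 := by
    zify [show 1 ≤ p by omega] at hd
    exact hd
  have hs := bstep_spec (p := p) m
  have key : (p:ℤ) * |bstep p m| < p * ((p:ℤ)^l + 1) := by
    calc (p:ℤ) * |bstep p m| = |p * bstep p m| := by
          rw [abs_mul, abs_of_pos hp0]
      _ = |m - bdigit p m| := by
          have he : p * bstep p m = m - bdigit p m := by omega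
          rw [he]
      _ ≤ |m| + |bdigit p m| := abs_sub _ _
      _ < p^(l+1) + p := by
          have h3 : (3:ℤ) ≤ p := by exact_mod_cast hp
          omega
      _ = p * ((p:ℤ)^l + 1) := by ring
  have h4 := lt_of_mul_lt_mul_left key (le_of_lt hp0)
  omega

lemma bstep_iter_zero (hp : 3 ≤ p) (hodd : Odd p) {m : ℤ} {l : ℕ} (h : |m| ≤ (p:ℤ)^l) :
    (bstep p)^[l+1] m = 0 := by
  induction l generalizing m with
  | zero =>
    simp only [zero_add, Function.iterate_one]
    apply bstep_small hp hodd
    have h3 : (3:ℤ) ≤ p := by exact_mod_cast hp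
    rw [pow_zero] at h
    omega
  | succ l ih =>
    rw [Function.iterate_succ_apply]
    exact ih (bstep_bound hp hodd h)

lemma bdig_eq_zero (hp : 3 ≤ p) (hodd : Odd p) {m : ℤ} {l : ℕ} (h : |m| ≤ (p:ℤ)^l)
    {k : ℕ} (hk : l < k) : bdig p m k = 0 := by
  have hit : (bstep p)^[k] m = 0 := by
    obtain ⟨r, hr⟩ : ∃ r, k = (l+1) + r := ⟨k - (l+1), by omega⟩
    subst hr
    rw [add_comm, Function.iterate_add_apply, bstep_iter_zero hp hodd h,
      bstep_iter_zero' hp hodd]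
  unfold bdig
  rw [hit]
  exact bdigit_small hp hodd (by
    have h3 : (3:ℤ) ≤ p := by exact_mod_cast hp
    rw [abs_zero, mul_zero]; omega)

lemma bdig_bound (hp : 3 ≤ p) (hodd : Odd p) (m : ℤ) (k : ℕ) :
    2 * (bdig p m k).natAbs ≤ p - 1 := bdigit_bound hp hodd _

lemma sum_bdig (m : ℤ) (K : ℕ) :
    m = (∑ k ∈ Finset.range K, bdig p m k * p^k) + p^K * (bstep p)^[K] m := by
  induction K with
  | zero => simp
  | succ K ih =>
    rw [Finset.sum_range_succ]
    have : (bstep p)^[K+1] m = bstep p ((bstep p)^[K] m) := Function.iterate_succ_apply' _ _ _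
    have hs := bstep_spec (p := p) ((bstep p)^[K] m)
    unfold bdig at ih ⊢
    rw [this]
    linear_combination ih + (p:ℤ)^K * hs

lemma sum_bdig_eq (hp : 3 ≤ p) (hodd : Odd p) {m : ℤ} {l : ℕ} (h : |m| ≤ (p:ℤ)^l) :
    m = ∑ k ∈ Finset.range (l+1), bdig p m k * p^k := by
  have := sum_bdig (p := p) m (l+1)
  rw [bstep_iter_zero hp hodd h] at this
  simpa using this

end Digits

section PruferLemmas
variable {p : ℕ}

lemma eP_val (n : ℕ) : ((eP p n : Prufer p) : AddCircle (1:ℚ)) = ((((p:ℚ)^n)⁻¹ : ℚ) : AddCircle (1:ℚ)) := rfl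

lemma zsmul_coe (c : ℤ) (q : ℚ) : c • ((q : ℚ) : AddCircle (1:ℚ)) = (((c * q : ℚ)) : AddCircle (1:ℚ)) := by
  rw [← AddCircle.coe_zsmul, zsmul_eq_mul]

lemma smul_eP (hp : 0 < p) {k n : ℕ} (hk : k ≤ n) : ((p:ℤ)^k) • eP p n = eP p (n - k) := by
  apply Subtype.ext
  push_cast
  rw [eP_val, eP_val, zsmul_coe]
  congr 1
  have hp0 : (p:ℚ) ≠ 0 := by positivity
  push_cast
  field_simp
  rw [← pow_add]
  congr 1
  omega

lemma smul_eP_zero (hp : 0 < p) {k n : ℕ} (hk : n ≤ k) : ((p:ℤ)^k) • eP p n = 0 := by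
  apply Subtype.ext
  push_cast
  rw [eP_val, zsmul_coe]
  have hp0 : (p:ℚ) ≠ 0 := by positivity
  have : ((p:ℤ)^k : ℚ) * ((p:ℚ)^n)⁻¹ = ((p:ℤ)^(k-n) : ℤ) := by
    push_cast
    field_simp
    rw [← pow_add]
    congr 1
    omega
  push_cast at this ⊢
  rw [this]
  rw [AddCircle.coe_eq_zero_iff]
  exact ⟨(p:ℤ)^(k-n), by push_cast; simp⟩

end PruferLemmas

section Block
variable {p : ℕ}
lemma block (hp : 3 ≤ p) (hodd : Odd p) {ν : ℤ} (hν : ν ≠ 0) {nn l : ℕ}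
    (hl : |ν| ≤ (p:ℤ)^l) (hln : l < nn) :
    ∃ ρ : ℕ →₀ ℤ,
      ρ.support ⊆ Finset.Icc (nn - l) nn ∧
      ρ.support.card = ((Finset.range (l+1)).filter (fun k => bdig p ν k ≠ 0)).card ∧
      (∀ m, 2 * (ρ m).natAbs ≤ p - 1) ∧
      ν • eP p nn = ∑ m ∈ ρ.support, ρ m • eP p m := by
  classical
  set g : ℕ → ℤ := fun m => if m ∈ Finset.Icc (nn - l) nn then bdig p ν (nn - m) else 0 with hg
  have hsupp : ∀ m, g m ≠ 0 → m ∈ Finset.Icc (nn - l) nn := by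
    intro m hm
    by_contra h
    apply hm
    simp only [hg]
    rw [if_neg h]
  set ρ : ℕ →₀ ℤ := Finsupp.onFinset _ g hsupp with hρ
  have happ : ∀ m, ρ m = g m := fun _ => rfl
  have hsub : ρ.support ⊆ Finset.Icc (nn - l) nn := fun m hm =>
    hsupp m (Finsupp.mem_support_iff.mp hm)
  have hIcc : Finset.Icc (nn - l) nn = (Finset.range (l+1)).image (fun k => nn - k) := by
    ext m
    simp only [Finset.mem_Icc, Finset.mem_image, Finset.mem_range]
    constructor
    · intro h
      exact ⟨nn - m, by omega, by omega⟩
    · rintro ⟨k, hk, rfl⟩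
      omega
  have hinj : ∀ a ∈ Finset.range (l+1), ∀ b ∈ Finset.range (l+1),
      nn - a = nn - b → a = b := by
    intro a ha b hb h
    simp only [Finset.mem_range] at ha hb
    omega
  have hsupp_eq : ρ.support
      = ((Finset.range (l+1)).filter (fun k => bdig p ν k ≠ 0)).image (fun k => nn - k) := by
    ext m
    simp only [Finsupp.mem_support_iff, happ, hg, Finset.mem_image, Finset.mem_filter,
      Finset.mem_range]
    constructor
    · intro h
      have hm : m ∈ Finset.Icc (nn - l) nn := by
        by_contra hc
        simp [hc] at h
      simp only [Finset.mem_Icc] at hm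
      rw [if_pos (Finset.mem_Icc.mpr hm)] at h
      exact ⟨nn - m, ⟨by omega, h⟩, by omega⟩
    · rintro ⟨k, ⟨hk, hbd⟩, rfl⟩
      have : nn - k ∈ Finset.Icc (nn - l) nn := Finset.mem_Icc.mpr (by omega)
      rw [if_pos this]
      have : nn - (nn - k) = k := by omega
      rw [this]
      exact hbd
  refine ⟨ρ, hsub, ?_, ?_, ?_⟩
  · rw [hsupp_eq]
    apply Finset.card_image_of_injOn
    intro a ha b hb
    exact hinj a (Finset.filter_subset _ _ ha) b (Finset.filter_subset _ _ hb)
  · intro m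
    rw [happ, hg]
    dsimp only
    split_ifs with h
    · exact bdig_bound hp hodd _ _
    · simp
  · have step1 : ∑ m ∈ ρ.support, ρ m • eP p m = ∑ m ∈ Finset.Icc (nn - l) nn, ρ m • eP p m := by
      apply Finset.sum_subset hsub
      intro m _ hm
      rw [Finsupp.notMem_support_iff.mp hm, zero_smul]
    have step2 : ∑ m ∈ Finset.Icc (nn - l) nn, ρ m • eP p m
        = ∑ k ∈ Finset.range (l+1), bdig p ν k • eP p (nn - k) := by
      rw [hIcc, Finset.sum_image hinj]
      apply Finset.sum_congr rfl
      intro k hk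
      simp only [Finset.mem_range] at hk
      rw [happ, hg]
      dsimp only
      rw [if_pos (by rw [hIcc]; exact Finset.mem_image.mpr ⟨k, Finset.mem_range.mpr hk, rfl⟩)]
      congr 2
      omega
    rw [step1, step2]
    have step3 : ∀ k ∈ Finset.range (l+1), bdig p ν k • eP p (nn - k)
        = (bdig p ν k * p^k) • eP p nn := by
      intro k hk
      simp only [Finset.mem_range] at hk
      rw [← smul_eP (by omega : 0 < p) (by omega : k ≤ nn), smul_smul]
    rw [Finset.sum_congr rfl step3, ← Finset.sum_smul, ← sum_bdig_eq hp hodd hl]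

lemma dcount_pos (hp : 3 ≤ p) (hodd : Odd p) {ν : ℤ} (hν : ν ≠ 0) {l : ℕ}
    (hl : |ν| ≤ (p:ℤ)^l) :
    0 < ((Finset.range (l+1)).filter (fun k => bdig p ν k ≠ 0)).card := by
  rw [Finset.card_pos, Finset.filter_nonempty_iff]
  by_contra h
  push_neg at h
  apply hν
  rw [sum_bdig_eq hp hodd hl]
  apply Finset.sum_eq_zero
  intro k hk
  rw [h k hk, zero_mul]

lemma sum_bound {s : Finset ℕ} {g : ℕ → ℕ →₀ ℤ}
    (hdisj : ∀ j₁ j₂, j₁ ≠ j₂ → Disjoint (g j₁).support (g j₂).support)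
    (hb : ∀ j k, 2 * ((g j) k).natAbs ≤ p - 1) (k : ℕ) :
    2 * ((∑ j ∈ s, g j) k).natAbs ≤ p - 1 := by
  rw [Finsupp.finset_sum_apply]
  by_cases hex : ∃ j₀ ∈ s, (g j₀) k ≠ 0
  · obtain ⟨j₀, hj₀, hne⟩ := hex
    rw [Finset.sum_eq_single_of_mem j₀ hj₀ ?_]
    · exact hb j₀ k
    · intro j hj hjne
      by_contra hc
      have h1 : k ∈ (g j).support := Finsupp.mem_support_iff.mpr hc
      have h2 : k ∈ (g j₀).support := Finsupp.mem_support_iff.mpr hne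
      exact (Finset.disjoint_left.mp (hdisj j j₀ hjne) h1) h2
  · push_neg at hex
    rw [Finset.sum_eq_zero hex]
    simp

end Block

section RepZero
variable {p : ℕ}
lemma repZero_int (hp3 : 3 ≤ p) : ∀ M : ℕ, ∀ τ : ℕ →₀ ℤ, τ 0 = 0 →
    (∀ n, (τ n).natAbs ≤ p - 1) → (∀ n ∈ τ.support, n ≤ M) →
    ((p:ℤ)^M ∣ ∑ n ∈ τ.support, τ n * p^(M-n)) → τ = 0 := by
  intro M
  induction M with
  | zero =>
    intro τ h0 hb hs hd
    ext a
    rcases Nat.eq_zero_or_pos a with rfl | ha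
    · simp [h0]
    · by_contra h
      have := hs a (Finsupp.mem_support_iff.mpr (by simpa using h))
      omega
  | succ M ih =>
    intro τ h0 hb hs hd
    have hsub : τ.support ⊆ Finset.range (M+2) := by
      intro a ha
      simp only [Finset.mem_range]
      exact Nat.lt_succ_of_le (hs a ha)
    have hext : ∑ n ∈ τ.support, τ n * (p:ℤ)^(M+1-n)
        = ∑ n ∈ Finset.range (M+2), τ n * (p:ℤ)^(M+1-n) := by
      apply Finset.sum_subset hsub
      intro a _ ha
      rw [Finsupp.notMem_support_iff.mp ha, zero_mul]
    have hsplit : ∑ n ∈ Finset.range (M+2), τ n * (p:ℤ)^(M+1-n)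
        = (∑ n ∈ Finset.range (M+1), τ n * (p:ℤ)^(M+1-n)) + τ (M+1) := by
      rw [Finset.sum_range_succ]
      simp
    have hdvd_sum : (p:ℤ) ∣ ∑ n ∈ Finset.range (M+1), τ n * (p:ℤ)^(M+1-n) := by
      apply Finset.dvd_sum
      intro a ha
      simp only [Finset.mem_range] at ha
      have : (p:ℤ)^(M+1-a) = p * p^(M-a) := by
        rw [← pow_succ']
        congr 1
        omega
      rw [this]
      exact Dvd.dvd.mul_left (Dvd.intro _ rfl) _
    have hdvd_v : (p:ℤ) ∣ ∑ n ∈ τ.support, τ n * (p:ℤ)^(M+1-n) :=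
      dvd_trans (dvd_pow_self (p:ℤ) (Nat.succ_ne_zero M)) hd
    have hτM : τ (M+1) = 0 := by
      have hdvd' : (p:ℤ) ∣ τ (M+1) := by
        rw [hext, hsplit] at hdvd_v
        exact (dvd_add_right hdvd_sum).mp hdvd_v
      have hbb := hb (M+1)
      have hlt : |τ (M+1)| < (p:ℤ) := by
        rw [Int.abs_eq_natAbs]
        omega
      exact Int.eq_zero_of_abs_lt_dvd hdvd' hlt
    apply ih τ h0 hb
    · intro a ha
      have h1 := hs a ha
      have h2 : a ≠ M + 1 := by
        intro h
        rw [h] at ha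
        exact (Finsupp.mem_support_iff.mp ha) hτM
      omega
    · have hfac : ∑ n ∈ τ.support, τ n * (p:ℤ)^(M+1-n)
          = p * ∑ n ∈ τ.support, τ n * (p:ℤ)^(M-n) := by
        rw [Finset.mul_sum]
        apply Finset.sum_congr rfl
        intro a ha
        have h1 := hs a ha
        have h2 : a ≠ M + 1 := fun h => (Finsupp.mem_support_iff.mp ha) (h ▸ hτM)
        have he : (p:ℤ)^(M+1-a) = p * p^(M-a) := by
          rw [← pow_succ']
          congr 1
          omega
        rw [he]
        ring
      rw [hfac, pow_succ'] at hd
      exact (mul_dvd_mul_iff_left (by positivity : (p:ℤ) ≠ 0)).mp hd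
lemma repZero (hp3 : 3 ≤ p) (τ : ℕ →₀ ℤ) (h0 : τ 0 = 0)
    (hb : ∀ n, (τ n).natAbs ≤ p - 1)
    (hz : ∑ n ∈ τ.support, τ n • eP p n = 0) : τ = 0 := by
  have hp0 : (p:ℚ) ≠ 0 := by positivity
  set Q : ℚ := ∑ n ∈ τ.support, (τ n : ℚ) * ((p:ℚ)^n)⁻¹ with hQ
  have hval : ((Q : ℚ) : AddCircle (1:ℚ)) = 0 := by
    have h1 : ((∑ n ∈ τ.support, τ n • eP p n : Prufer p) : AddCircle (1:ℚ)) = 0 := by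
      rw [hz]; rfl
    have h2 : ((∑ n ∈ τ.support, τ n • eP p n : Prufer p) : AddCircle (1:ℚ))
        = ∑ n ∈ τ.support, ((τ n • eP p n : Prufer p) : AddCircle (1:ℚ)) := by
      exact AddSubmonoidClass.coe_finset_sum _ _
    have h3 : ∀ nn : ℕ, ((τ nn • eP p nn : Prufer p) : AddCircle (1:ℚ))
        = (((τ nn : ℚ) * ((p:ℚ)^nn)⁻¹ : ℚ) : AddCircle (1:ℚ)) := by
      intro nn
      have : ((τ nn • eP p nn : Prufer p) : AddCircle (1:ℚ))
          = τ nn • ((eP p nn : Prufer p) : AddCircle (1:ℚ)) := rfl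
      rw [this, eP_val, zsmul_coe]
    rw [h2] at h1
    rw [Finset.sum_congr rfl (fun nn _ => h3 nn)] at h1
    rw [hQ]
    rw [← h1]
    exact map_sum (QuotientAddGroup.mk' (AddSubgroup.zmultiples (1:ℚ))) _ _
  obtain ⟨m, hm⟩ := (AddCircle.coe_eq_zero_iff (1:ℚ)).mp hval
  rw [zsmul_eq_mul, mul_one] at hm
  set M : ℕ := τ.support.sup id with hM
  have hle : ∀ nn ∈ τ.support, nn ≤ M := fun nn h => Finset.le_sup (f := id) h
  have key : (∑ n ∈ τ.support, τ n * (p:ℤ)^(M-n)) = m * (p:ℤ)^M := by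
    have : ((∑ n ∈ τ.support, τ n * (p:ℤ)^(M-n) : ℤ) : ℚ) = ((m * (p:ℤ)^M : ℤ) : ℚ) := by
      push_cast
      have hterm : ∀ nn ∈ τ.support,
          (τ nn : ℚ) * (p:ℚ)^(M-nn) = (p:ℚ)^M * ((τ nn : ℚ) * ((p:ℚ)^nn)⁻¹) := by
        intro nn h
        rw [pow_sub₀ _ hp0 (hle nn h)]
        ring
      rw [Finset.sum_congr rfl hterm, ← Finset.mul_sum, ← hQ, hm]
      ring
    exact_mod_cast this
  exact repZero_int hp3 M τ h0 hb hle ⟨m, by rw [key]; ring⟩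

lemma T_apply (ρ : ℕ →₀ ℤ) :
    Finsupp.linearCombination ℤ (eP p) ρ = ∑ n ∈ ρ.support, ρ n • eP p n := by
  rw [Finsupp.linearCombination_apply]
  rfl

end RepZero

section Master
variable {p : ℕ}

/-- Canonical representation of a "block sum" `∑_{j ∈ [i,f)} ν_j e_{n_j - s}`. -/
lemma master (hp3 : 3 ≤ p) (hodd : Odd p) (f : ℕ) (ν : ℕ → ℤ) (n : ℕ → ℕ)
    (hν : ∀ j < f, ν j ≠ 0) (i s : ℕ)
    (hfit : ∀ j, i ≤ j → j < f → Nat.clog p (ν j).natAbs + s < n j)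
    (hsep : ∀ j j', i ≤ j → j < j' → j' < f → n j + Nat.clog p (ν j').natAbs < n j') :
    ∃ E : ℕ →₀ ℤ, E 0 = 0 ∧ (∀ k, 2 * (E k).natAbs ≤ p - 1) ∧
      E.support.card = ∑ j ∈ Finset.Ico i f,
        ((Finset.range (Nat.clog p (ν j).natAbs + 1)).filter (fun k => bdig p (ν j) k ≠ 0)).card ∧
      ∑ k ∈ E.support, E k • eP p k = ∑ j ∈ Finset.Ico i f, ν j • eP p (n j - s) := by
  classical
  set l : ℕ → ℕ := fun j => Nat.clog p (ν j).natAbs with hl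
  have hfit' : ∀ j, i ≤ j → j < f → l j + s < n j := hfit
  have hsep' : ∀ j j', i ≤ j → j < j' → j' < f → n j + l j' < n j' := hsep
  have habs : ∀ j, j < f → |ν j| ≤ (p:ℤ)^(l j) := by
    intro j hj
    have := Nat.le_pow_clog (by omega : 1 < p) (ν j).natAbs
    rw [Int.abs_eq_natAbs]
    exact_mod_cast this
  have hB : ∀ j, ∃ ρ : ℕ →₀ ℤ,
      (j ∈ Finset.Ico i f →
        ρ.support ⊆ Finset.Icc (n j - s - l j) (n j - s) ∧
        ρ.support.card
          = ((Finset.range (l j + 1)).filter (fun k => bdig p (ν j) k ≠ 0)).card ∧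
        (∀ m, 2 * (ρ m).natAbs ≤ p - 1) ∧
        ν j • eP p (n j - s) = ∑ m ∈ ρ.support, ρ m • eP p m) ∧
      (j ∉ Finset.Ico i f → ρ = 0) := by
    intro j
    by_cases h : j ∈ Finset.Ico i f
    · obtain ⟨hij, hjf⟩ := Finset.mem_Ico.mp h
      have hfitj := hfit' j hij hjf
      obtain ⟨ρ, h1, h2, h3, h4⟩ := block hp3 hodd (hν j hjf) (habs j hjf)
        (show l j < n j - s by omega)
      exact ⟨ρ, fun _ => ⟨h1, h2, h3, h4⟩, fun hc => absurd h hc⟩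
    · exact ⟨0, fun hc => absurd hc h, fun _ => rfl⟩
  choose ρB hρB hρB0 using hB
  have hbot : ∀ j ∈ Finset.Ico i f, 1 ≤ n j - s - l j := by
    intro j hj
    obtain ⟨hij, hjf⟩ := Finset.mem_Ico.mp hj
    have := hfit' j hij hjf
    omega
  have hdisj : ∀ j₁ j₂, j₁ ≠ j₂ → Disjoint (ρB j₁).support (ρB j₂).support := by
    have key : ∀ j₁ j₂, j₁ < j₂ → Disjoint (ρB j₁).support (ρB j₂).support := by
      intro j₁ j₂ hlt
      by_cases h1 : j₁ ∈ Finset.Ico i f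
      · by_cases h2 : j₂ ∈ Finset.Ico i f
        · obtain ⟨hi1, hf1⟩ := Finset.mem_Ico.mp h1
          obtain ⟨hi2, hf2⟩ := Finset.mem_Ico.mp h2
          have hs12 := hsep' j₁ j₂ hi1 hlt hf2
          have hfit2 := hfit' j₂ hi2 hf2
          rw [Finset.disjoint_left]
          intro a ha1 ha2
          have hm1 := Finset.mem_Icc.mp ((hρB j₁ h1).1 ha1)
          have hm2 := Finset.mem_Icc.mp ((hρB j₂ h2).1 ha2)
          omega
        · rw [hρB0 j₂ h2]
          simp
      · rw [hρB0 j₁ h1]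
        simp
    intro j₁ j₂ hne
    rcases lt_or_gt_of_ne hne with h | h
    · exact key _ _ h
    · exact (key _ _ h).symm
  set E : ℕ →₀ ℤ := ∑ j ∈ Finset.Ico i f, ρB j with hE
  have hsuppE : E.support = (Finset.Ico i f).biUnion (fun j => (ρB j).support) :=
    Finsupp.support_sum_eq_biUnion _ hdisj
  refine ⟨E, ?_, ?_, ?_, ?_⟩
  · by_contra h
    have h0 : (0:ℕ) ∈ E.support := Finsupp.mem_support_iff.mpr h
    rw [hsuppE, Finset.mem_biUnion] at h0
    obtain ⟨j, hj, h0⟩ := h0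
    have := Finset.mem_Icc.mp ((hρB j hj).1 h0)
    have := hbot j hj
    omega
  · intro k
    apply sum_bound hdisj
    intro j k'
    by_cases h : j ∈ Finset.Ico i f
    · exact (hρB j h).2.2.1 k'
    · rw [hρB0 j h]
      simp
  · rw [hsuppE, Finset.card_biUnion (fun j₁ _ j₂ _ hne => hdisj j₁ j₂ hne)]
    exact Finset.sum_congr rfl (fun j hj => (hρB j hj).2.1)
  · have hTE : ∑ k ∈ E.support, E k • eP p k = Finsupp.linearCombination ℤ (eP p) E :=
      (T_apply E).symm
    rw [hTE, hE, map_sum]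
    apply Finset.sum_congr rfl
    intro j hj
    rw [T_apply]
    exact ((hρB j hj).2.2.2).symm

end Master

/-- With `y = ν₁ e_{n₁} + ⋯ + ν_f e_{n_f}` as in the gap condition, if `λ(z) < λ(y)` then
`o(y + z) ≥ p^{n_{f - λ(z)} - l_{f - λ(z)}}`. -/
theorem stmt15 (p : ℕ) (hp : p.Prime) (hodd : p ≠ 2) (f : ℕ) (hf : 0 < f)
    (ν : ℕ → ℤ) (n : ℕ → ℕ) (hν : ∀ i < f, ν i ≠ 0) (hpos : 0 < n 0)
    (hmono : ∀ i, i + 1 < f → n i < n (i + 1))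
    (hgap : ∀ i, i + 1 < f → n i + Nat.clog p (ν (i + 1)).natAbs < n (i + 1))
    (y : Prufer p) (hy : y = ∑ i ∈ Finset.range f, ν i • eP p (n i))
    (σ : ℕ →₀ ℤ) (hσ : IsCanonical p y σ)
    (z : Prufer p) (τ : ℕ →₀ ℤ) (hτ : IsCanonical p z τ)
    (hlt : τ.support.card < σ.support.card) :
    p ^ (n (f - τ.support.card - 1) -
        Nat.clog p (ν (f - τ.support.card - 1)).natAbs) ≤ addOrderOf (y + z) := by
  classical
  have hp3 : 3 ≤ p := by
    have := hp.two_le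
    omega
  have hoddp : Odd p := hp.odd_of_ne_two hodd
  set t : ℕ := τ.support.card with ht
  set i : ℕ := f - t - 1 with hi
  set N : ℕ := n i - Nat.clog p (ν i).natAbs with hN
  have hif : i < f := by omega
  -- monotonicity helpers
  have hmono2 : ∀ d j, j + d < f → n j ≤ n (j + d) := by
    intro d
    induction d with
    | zero => intro j _; simp
    | succ d ih =>
      intro j hjd
      have h1 : n j ≤ n (j + d) := ih j (by omega)
      have h2 : n (j + d) < n (j + d + 1) := hmono _ (by omega)
      calc n j ≤ n (j+d) := h1
        _ ≤ n (j+d+1) := le_of_lt h2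
        _ = n (j + (d+1)) := by rw [Nat.add_assoc]
  have hmono' : ∀ j k, j ≤ k → k < f → n j ≤ n k := by
    intro j k hjk hkf
    obtain ⟨d, rfl⟩ : ∃ d, k = j + d := ⟨k - j, by omega⟩
    exact hmono2 d j hkf
  -- finite order
  obtain ⟨K, hK⟩ := (y + z).2
  have hKz : p ^ K • (y + z) = 0 := Subtype.ext hK
  have hfin : IsOfFinAddOrder (y + z) :=
    isOfFinAddOrder_iff_nsmul_eq_zero.mpr ⟨p ^ K, pow_pos (by omega) K, hKz⟩
  have hdvd : addOrderOf (y + z) ∣ p ^ K := addOrderOf_dvd_of_nsmul_eq_zero hKz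
  obtain ⟨e, heK, horder⟩ := (Nat.dvd_prime_pow hp).mp hdvd
  rcases Nat.eq_zero_or_pos N with hN0 | hNpos
  · rw [hN0, pow_zero]
    exact hfin.addOrderOf_pos
  -- main case
  suffices hne : p ^ (N - 1) • (y + z) ≠ 0 by
    have hord : ¬ addOrderOf (y + z) ∣ p ^ (N - 1) := fun h =>
      hne (addOrderOf_dvd_iff_nsmul_eq_zero.mp h)
    rw [horder] at hord
    have heN : N ≤ e := by
      by_contra hc
      exact hord (pow_dvd_pow p (by omega))
    calc p ^ N ≤ p ^ e := Nat.pow_le_pow_right (by omega) heN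
      _ = addOrderOf (y + z) := horder.symm
  intro hcontra
  have hcz : ((p:ℤ) ^ (N - 1)) • (y + z) = 0 := by
    have h1 : (((p ^ (N - 1) : ℕ)) : ℤ) • (y + z) = 0 := by
      rw [natCast_zsmul]
      exact hcontra
    push_cast at h1
    exact h1
  -- block representation of p^(N-1) • y
  have hfitm : ∀ j, i ≤ j → j < f → Nat.clog p (ν j).natAbs + (N - 1) < n j := by
    intro j hij hjf
    rcases eq_or_lt_of_le hij with rfl | hlt2
    · omega
    · have h1 := hgap (j - 1) (by omega)
      have h2 : n i ≤ n (j - 1) := hmono' i (j - 1) (by omega) (by omega)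
      rw [show j - 1 + 1 = j by omega] at h1
      omega
  have hsepm : ∀ j j', i ≤ j → j < j' → j' < f →
      n j + Nat.clog p (ν j').natAbs < n j' := by
    intro j j' hij hjj' hj'f
    have h1 := hgap (j' - 1) (by omega)
    have h2 : n j ≤ n (j' - 1) := hmono' j (j' - 1) (by omega) (by omega)
    rw [show j' - 1 + 1 = j' by omega] at h1
    omega
  obtain ⟨E, hE0, hEb, hEcard, hEsum⟩ := master hp3 hoddp f ν n hν i (N - 1) hfitm hsepm
  have hyy : ((p:ℤ) ^ (N - 1)) • y = ∑ k ∈ E.support, E k • eP p k := by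
    rw [hEsum, hy, Finset.smul_sum]
    rw [Finset.range_eq_Ico, ← Finset.sum_Ico_consecutive _ (Nat.zero_le i) (le_of_lt hif)]
    have hlow : ∀ j ∈ Finset.Ico 0 i, ((p:ℤ) ^ (N - 1)) • (ν j • eP p (n j)) = 0 := by
      intro j hj
      obtain ⟨_, hji⟩ := Finset.mem_Ico.mp hj
      have hnj : n j ≤ N - 1 := by
        have h1 := hgap (i - 1) (by omega)
        have h2 : n j ≤ n (i - 1) := hmono' j (i - 1) (by omega) (by omega)
        rw [show i - 1 + 1 = i by omega] at h1
        omega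
      rw [smul_comm, smul_eP_zero (by omega) hnj, smul_zero]
    rw [Finset.sum_eq_zero hlow, zero_add]
    apply Finset.sum_congr rfl
    intro j hj
    obtain ⟨hij, hjf⟩ := Finset.mem_Ico.mp hj
    have hfj := hfitm j hij hjf
    rw [smul_comm, smul_eP (by omega) (by omega : N - 1 ≤ n j)]
  -- shifted representation of p^(N-1) • z
  obtain ⟨⟨hτ0, hτsum⟩, hτb⟩ := hτ
  set W : Finset ℕ := τ.support.filter (fun nn => N ≤ nn) with hW
  have hzz : ((p:ℤ) ^ (N - 1)) • z = ∑ nn ∈ W, τ nn • eP p (nn - (N - 1)) := by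
    rw [hτsum, Finset.smul_sum,
      ← Finset.sum_filter_add_sum_filter_not τ.support (fun nn => N ≤ nn)]
    have hlow : ∀ nn ∈ τ.support.filter (fun nn => ¬ N ≤ nn),
        ((p:ℤ) ^ (N - 1)) • (τ nn • eP p nn) = 0 := by
      intro nn hnn
      have h1 : ¬ N ≤ nn := (Finset.mem_filter.mp hnn).2
      rw [smul_comm, smul_eP_zero (by omega) (by omega : nn ≤ N - 1), smul_zero]
    rw [Finset.sum_eq_zero hlow, add_zero]
    refine Finset.sum_congr rfl (fun nn hnn => ?_)
    have h1 : N ≤ nn := (Finset.mem_filter.mp hnn).2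
    rw [smul_comm, smul_eP (by omega) (by omega : N - 1 ≤ nn)]
  set g : ℕ → ℤ := fun k => if k = 0 then 0 else τ (k + (N - 1)) with hg
  have hgsupp : ∀ k, g k ≠ 0 → k ∈ W.image (fun nn => nn - (N - 1)) := by
    intro k hk
    by_cases h0 : k = 0
    · rw [hg] at hk
      simp [h0] at hk
    · rw [hg] at hk
      simp only [if_neg h0] at hk
      exact Finset.mem_image.mpr ⟨k + (N - 1),
        Finset.mem_filter.mpr ⟨Finsupp.mem_support_iff.mpr hk, by omega⟩, by omega⟩
  set τ' : ℕ →₀ ℤ := Finsupp.onFinset _ g hgsupp with hτ'def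
  have hτ'app : ∀ k, τ' k = g k := fun _ => rfl
  have hτ'0 : τ' 0 = 0 := by simp [hτ'app, hg]
  have hτ'b : ∀ k, 2 * (τ' k).natAbs ≤ p - 1 := by
    intro k
    rw [hτ'app, hg]
    dsimp only
    split_ifs with h
    · simp
    · exact hτb _
  have hτ'card : τ'.support.card ≤ t := by
    calc τ'.support.card ≤ (W.image (fun nn => nn - (N - 1))).card :=
          Finset.card_le_card Finsupp.support_onFinset_subset
      _ ≤ W.card := Finset.card_image_le
      _ ≤ τ.support.card := Finset.card_filter_le _ _
  have hinj2 : ∀ a ∈ W, ∀ b ∈ W, a - (N - 1) = b - (N - 1) → a = b := by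
    intro a ha b hb h
    have h1 : N ≤ a := (Finset.mem_filter.mp ha).2
    have h2 : N ≤ b := (Finset.mem_filter.mp hb).2
    omega
  have hzz' : ((p:ℤ) ^ (N - 1)) • z = ∑ k ∈ τ'.support, τ' k • eP p k := by
    rw [hzz]
    rw [Finset.sum_subset (Finsupp.support_onFinset_subset :
      τ'.support ⊆ W.image (fun nn => nn - (N - 1)))
      (fun k _ hk => by rw [Finsupp.notMem_support_iff.mp hk, zero_smul])]
    rw [Finset.sum_image hinj2]
    refine Finset.sum_congr rfl (fun nn hnn => ?_)
    have h1 : N ≤ nn := (Finset.mem_filter.mp hnn).2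
    have : τ' (nn - (N - 1)) = τ nn := by
      rw [hτ'app, hg]
      dsimp only
      rw [if_neg (by omega)]
      congr 1
      omega
    rw [this]
  -- the sum E + τ' is a canonical representation of 0
  have hsum0 : ∑ k ∈ (E + τ').support, (E + τ') k • eP p k = 0 := by
    rw [← T_apply, map_add, T_apply, T_apply, ← hyy, ← hzz', ← smul_add, hcz]
  have hEτ' : E + τ' = 0 := by
    apply repZero hp3 _ (by rw [Finsupp.add_apply, hE0, hτ'0, add_zero])
    · intro nn
      have h1 := hEb nn
      have h2 := hτ'b nn
      have h3 : ((E + τ') nn).natAbs ≤ (E nn).natAbs + (τ' nn).natAbs := by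
        rw [Finsupp.add_apply]
        exact Int.natAbs_add_le _ _
      omega
    · exact hsum0
  have hEneg : E = -τ' := eq_neg_of_add_eq_zero_left hEτ'
  have hcards : E.support.card = τ'.support.card := by
    rw [hEneg, Finsupp.support_neg]
  -- lower bound on the number of digits of E
  have hlb : t + 1 ≤ E.support.card := by
    rw [hEcard]
    by_cases hcase : t < f
    · have hcardIco : (Finset.Ico i f).card = t + 1 := by
        rw [Nat.card_Ico]
        omega
      calc t + 1 = ∑ _j ∈ Finset.Ico i f, 1 := by
            rw [Finset.sum_const, smul_eq_mul, mul_one, hcardIco]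
        _ ≤ ∑ j ∈ Finset.Ico i f,
              ((Finset.range (Nat.clog p (ν j).natAbs + 1)).filter
                (fun k => bdig p (ν j) k ≠ 0)).card := by
            apply Finset.sum_le_sum
            intro j hj
            obtain ⟨hij, hjf⟩ := Finset.mem_Ico.mp hj
            have habsj : |ν j| ≤ (p:ℤ) ^ (Nat.clog p (ν j).natAbs) := by
              have := Nat.le_pow_clog (by omega : 1 < p) (ν j).natAbs
              rw [Int.abs_eq_natAbs]
              exact_mod_cast this
            exact dcount_pos hp3 hoddp (hν j hjf) habsj
    · -- t ≥ f : use the canonical form of y itself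
      have hi0 : i = 0 := by omega
      have hclog0 : Nat.clog p (ν 0).natAbs < n 0 := by
        have hNi := hN
        rw [hi0] at hNi
        omega
      have hfit0 : ∀ j, 0 ≤ j → j < f → Nat.clog p (ν j).natAbs + 0 < n j := by
        intro j _ hjf
        rcases Nat.eq_zero_or_pos j with rfl | hj0
        · omega
        · have h1 := hgap (j - 1) (by omega)
          have h2 : 0 < n (j - 1) := by
            have := hmono' 0 (j - 1) (by omega) (by omega)
            omega
          rw [show j - 1 + 1 = j by omega] at h1
          omega
      have hsep0 : ∀ j j', 0 ≤ j → j < j' → j' < f →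
          n j + Nat.clog p (ν j').natAbs < n j' := by
        intro j j' _ hjj' hj'f
        have h1 := hgap (j' - 1) (by omega)
        have h2 : n j ≤ n (j' - 1) := hmono' j (j' - 1) (by omega) (by omega)
        rw [show j' - 1 + 1 = j' by omega] at h1
        omega
      obtain ⟨E₀, hE₀0, hE₀b, hE₀card, hE₀sum⟩ := master hp3 hoddp f ν n hν 0 0 hfit0 hsep0
      have hyE₀ : ∑ k ∈ E₀.support, E₀ k • eP p k = y := by
        rw [hE₀sum, hy, Finset.range_eq_Ico]
        refine Finset.sum_congr rfl (fun j _ => ?_)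
        rw [Nat.sub_zero]
      obtain ⟨⟨hσ0, hσsum⟩, hσb⟩ := hσ
      have hdiff : σ - E₀ = 0 := by
        apply repZero hp3 _ (by rw [Finsupp.sub_apply, hσ0, hE₀0, sub_zero])
        · intro nn
          have h1 := hσb nn
          have h2 := hE₀b nn
          have h3 : ((σ - E₀) nn).natAbs ≤ (σ nn).natAbs + (E₀ nn).natAbs := by
            rw [Finsupp.sub_apply]
            exact Int.natAbs_sub_le _ _
          omega
        · rw [← T_apply, map_sub, T_apply, T_apply, hyE₀, ← hσsum, sub_self]
      have hσE₀ : σ = E₀ := sub_eq_zero.mp hdiff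
      have hcardσ : σ.support.card
          = ∑ j ∈ Finset.Ico 0 f,
              ((Finset.range (Nat.clog p (ν j).natAbs + 1)).filter
                (fun k => bdig p (ν j) k ≠ 0)).card := by
        rw [hσE₀, hE₀card]
      rw [hi0]
      rw [← hcardσ]
      omega
  omega
end
end

section
/- Let p be an odd prime, l ∈ ℕ, z ∈ ℤ(p^∞)(l,1)_e (i.e., z is a sum Σ m_i e_{k_i} over distinct indices with Σ|m_i| ≤ l), and y = e_{n₁} + ⋯ + e_{n_f} with n₁ < ⋯ < n_f, l < f, and n_i < n_{i+1} − l. Then for every integer μ with 0 < |μ| ≤ l, the order of μy + z is at least p^{n_{f−l} − l}, which is at least p^{n₁ − l}. -/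
open Filter Topology

noncomputable section

namespace Stmt16Aux

noncomputable def CC : ℚ →+ AddCircle (1:ℚ) := QuotientAddGroup.mk' _


/-- balanced digit predicate -/
def Bal (P d : ℤ) : Prop := -(P - 1) ≤ 2 * d ∧ 2 * d ≤ P - 1

/-- balanced residue -/
def bd (P n : ℤ) : ℤ := if 2 * (n % P) ≤ P - 1 then n % P else n % P - P

lemma bd_bal {P : ℤ} (hP : 2 < P) (hodd : P % 2 = 1) (n : ℤ) : Bal P (bd P n) := by
  have h0 : 0 ≤ n % P := Int.emod_nonneg n (by omega)
  have h1 : n % P < P := Int.emod_lt_of_pos n (by omega)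
  unfold bd Bal
  split_ifs with h
  · constructor <;> omega
  · constructor <;> omega

lemma bd_dvd {P : ℤ} (n : ℤ) : P ∣ n - bd P n := by
  have hd : n % P = n - P * (n / P) := Int.emod_def n P
  unfold bd
  split_ifs with h
  · exact ⟨n / P, by omega⟩
  · exact ⟨n / P + 1, by rw [mul_add, mul_one]; omega⟩

lemma bal_eq {P a b : ℤ} (hP : 2 < P) (ha : Bal P a) (hb : Bal P b) (h : P ∣ a - b) : a = b := by
  have h2 : |a - b| < P := by
    rcases ha with ⟨ha1, ha2⟩; rcases hb with ⟨hb1, hb2⟩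
    rw [abs_lt]; omega
  have := Int.eq_zero_of_abs_lt_dvd h h2
  omega

lemma bd_congr {P a b : ℤ} (hP : 2 < P) (hodd : P % 2 = 1) (h : P ∣ a - b) :
    bd P a = bd P b := by
  apply bal_eq hP (bd_bal hP hodd a) (bd_bal hP hodd b)
  have h1 := bd_dvd (P := P) a
  have h2 := bd_dvd (P := P) b
  have : bd P a - bd P b = (a - bd P a) * (-1) + (b - bd P b) + (a - b) := by ring
  rw [this]
  exact dvd_add (dvd_add (Dvd.dvd.mul_right h1 _) h2) h

lemma bd_eq_of {P a d : ℤ} (hP : 2 < P) (hodd : P % 2 = 1) (hd : Bal P d) (h : P ∣ a - d) :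
    bd P a = d := by
  apply bal_eq hP (bd_bal hP hodd a) hd
  have h1 := bd_dvd (P := P) a
  have : bd P a - d = (a - d) - (a - bd P a) := by ring
  rw [this]
  exact dvd_sub h h1

/-- balanced digits list -/
def bds (P : ℤ) : ℕ → ℤ → List ℤ
  | 0, _ => []
  | K+1, n => bd P n :: bds P K ((n - bd P n) / P)

def lval (P : ℤ) : List ℤ → ℤ
  | [] => 0
  | d :: T => d + P * lval P T

def lmass (L : List ℤ) : ℕ := (L.map Int.natAbs).sum

@[simp] lemma lval_nil (P : ℤ) : lval P [] = 0 := rfl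
@[simp] lemma lval_cons (P d : ℤ) (T : List ℤ) : lval P (d :: T) = d + P * lval P T := rfl
@[simp] lemma lmass_nil : lmass [] = 0 := rfl
@[simp] lemma lmass_cons (d : ℤ) (T : List ℤ) : lmass (d :: T) = d.natAbs + lmass T := rfl

@[simp] lemma bds_length (P : ℤ) : ∀ (K : ℕ) (n : ℤ), (bds P K n).length = K := by
  intro K
  induction K with
  | zero => intro n; rfl
  | succ K ih => intro n; simp [bds, ih]

lemma bds_balanced {P : ℤ} (hP : 2 < P) (hodd : P % 2 = 1) :
    ∀ (K : ℕ) (n : ℤ), ∀ d ∈ bds P K n, Bal P d := by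
  intro K
  induction K with
  | zero => intro n d hd; simp [bds] at hd
  | succ K ih =>
    intro n d hd
    simp only [bds, List.mem_cons] at hd
    rcases hd with rfl | hd
    · exact bd_bal hP hodd n
    · exact ih _ d hd

lemma sub_bd_div {P : ℤ} (hP : 2 < P) (n : ℤ) : n - bd P n = P * ((n - bd P n) / P) := by
  rw [mul_comm]
  exact (Int.ediv_mul_cancel (bd_dvd n)).symm

lemma bds_correct {P : ℤ} (hP : 2 < P) :
    ∀ (K : ℕ) (n : ℤ), P ^ K ∣ n - lval P (bds P K n) := by
  intro K
  induction K with
  | zero => intro n; simp [bds]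
  | succ K ih =>
    intro n
    obtain ⟨m, hm⟩ := ih ((n - bd P n) / P)
    have hdiv := sub_bd_div hP n
    refine ⟨m, ?_⟩
    simp only [bds, lval_cons]
    rw [pow_succ]
    have : n - (bd P n + P * lval P (bds P K ((n - bd P n) / P)))
        = P * ((n - bd P n) / P - lval P (bds P K ((n - bd P n) / P))) := by
      rw [mul_sub, ← hdiv]; ring
    rw [this, hm]; ring

lemma bds_unique {P : ℤ} (hP : 2 < P) (hodd : P % 2 = 1) :
    ∀ (K : ℕ) (L : List ℤ) (n : ℤ), L.length = K → (∀ d ∈ L, Bal P d) →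
      P ^ K ∣ n - lval P L → L = bds P K n := by
  intro K
  induction K with
  | zero => intro L n h _ _; simpa [List.length_eq_zero_iff, bds] using h
  | succ K ih =>
    intro L n hlen hbal hdvd
    rcases L with _ | ⟨d, T⟩
    · simp at hlen
    have hTlen : T.length = K := by simpa using hlen
    simp only [lval_cons] at hdvd
    have hPd : P ∣ n - d := by
      have h1 : P ∣ n - (d + P * lval P T) := dvd_trans (dvd_pow_self P (Nat.succ_ne_zero K)) hdvd
      obtain ⟨m, hm⟩ := h1
      exact ⟨m + lval P T, by linarith [hm]⟩
    have hd : d = bd P n := (bd_eq_of hP hodd (hbal d List.mem_cons_self) hPd).symm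
    subst hd
    have hdiv := sub_bd_div hP n
    have hT : T = bds P K ((n - bd P n) / P) := by
      apply ih T _ hTlen (fun x hx => hbal x (List.mem_cons_of_mem _ hx))
      obtain ⟨m, hm⟩ := hdvd
      refine ⟨m, ?_⟩
      have hP0 : P ≠ 0 := by omega
      apply Int.eq_of_mul_eq_mul_left hP0
      have hdiv2 : P * ((n - bd P n) / P) = n - bd P n := hdiv.symm
      rw [pow_succ] at hm
      rw [mul_sub, hdiv2]
      have h3 : P * (P ^ K * m) = P ^ K * P * m := by ring
      rw [h3]
      linarith [hm]
    rw [bds, ← hT]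

lemma lval_replicate_zero (P : ℤ) : ∀ K : ℕ, lval P (List.replicate K 0) = 0 := by
  intro K
  induction K with
  | zero => rfl
  | succ K ih => simp [List.replicate_succ, ih]

lemma lmass_replicate_zero : ∀ K : ℕ, lmass (List.replicate K 0) = 0 := by
  intro K
  induction K with
  | zero => rfl
  | succ K ih => simp [List.replicate_succ, ih]

/-- adding ±P^j changes mass by at most 1 -/
lemma mass_add_unit {P : ℤ} (hP : 2 < P) (hodd : P % 2 = 1) :
    ∀ (K : ℕ) (n : ℤ) (j : ℕ) (ε : ℤ), (ε = 1 ∨ ε = -1) →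
      lmass (bds P K (n + ε * P ^ j)) ≤ lmass (bds P K n) + 1 := by
  intro K
  induction K with
  | zero => intro n j ε hε; simp [bds]
  | succ K ih =>
    intro n j ε hε
    have hP0 : P ≠ 0 := by omega
    rcases j with _ | j
    · -- j = 0
      have hε1 : ε * P ^ 0 = ε := by simp
      rw [hε1]
      obtain ⟨b, hb⟩ : ∃ b, bd P n = b := ⟨_, rfl⟩
      have hbbal : Bal P b := hb ▸ bd_bal hP hodd n
      have hbd : P ∣ n - b := hb ▸ bd_dvd (P := P) n
      have hdiv0 := sub_bd_div hP n
      rw [hb] at hdiv0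
      obtain ⟨m, hm⟩ : ∃ m, (n - b) / P = m := ⟨_, rfl⟩
      have hdiv : n - b = P * m := by rw [← hm]; exact hdiv0
      by_cases hcase : Bal P (b + ε)
      · have hhead : bd P (n + ε) = b + ε := by
          apply bd_eq_of hP hodd hcase
          have h2 : n + ε - (b + ε) = n - b := by ring
          rw [h2]; exact hbd
        have htail : (n + ε - (b + ε)) / P = m := by
          have h2 : n + ε - (b + ε) = n - b := by ring
          rw [h2]; exact hm
        conv_lhs => rw [bds]
        rw [hhead, htail, lmass_cons]
        conv_rhs => rw [bds]
        rw [lmass_cons, hb, hm]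
        have : (b + ε).natAbs ≤ b.natAbs + 1 := by rcases hε with rfl | rfl <;> omega
        omega
      · rcases hε with rfl | rfl
        · -- ε = 1, b = (P-1)/2
          have hbval : 2 * b = P - 1 := by
            rcases hbbal with ⟨h1, h2⟩
            unfold Bal at hcase
            omega
          have hd2 : Bal P (b + 1 - P) := by constructor <;> omega
          have hhead : bd P (n + 1) = b + 1 - P := by
            apply bd_eq_of hP hodd hd2
            obtain ⟨w, hw⟩ := hbd
            exact ⟨w + 1, by rw [mul_add, mul_one]; omega⟩
          have htail : (n + 1 - (b + 1 - P)) / P = m + 1 := by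
            have h2 : n + 1 - (b + 1 - P) = P * (m + 1) := by
              rw [mul_add, ← hdiv, mul_one]; ring
            rw [h2, Int.mul_ediv_cancel_left _ hP0]
          conv_lhs => rw [bds]
          rw [hhead, htail, lmass_cons]
          conv_rhs => rw [bds]
          rw [lmass_cons, hb, hm]
          have hmass : lmass (bds P K (m + 1)) ≤ lmass (bds P K m) + 1 := by
            have := ih m 0 1 (Or.inl rfl)
            simpa using this
          have : (b + 1 - P).natAbs = b.natAbs := by omega
          omega
        · -- ε = -1, b = -(P-1)/2
          have hbval : 2 * b = -(P - 1) := by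
            rcases hbbal with ⟨h1, h2⟩
            unfold Bal at hcase
            omega
          have hd2 : Bal P (b - 1 + P) := by constructor <;> omega
          have hhead : bd P (n + -1) = b - 1 + P := by
            apply bd_eq_of hP hodd hd2
            obtain ⟨w, hw⟩ := hbd
            exact ⟨w - 1, by rw [mul_sub, mul_one]; omega⟩
          have htail : (n + -1 - (b - 1 + P)) / P = m - 1 := by
            have h2 : n + -1 - (b - 1 + P) = P * (m - 1) := by
              rw [mul_sub, ← hdiv, mul_one]; ring
            rw [h2, Int.mul_ediv_cancel_left _ hP0]
          conv_lhs => rw [bds]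
          rw [hhead, htail, lmass_cons]
          conv_rhs => rw [bds]
          rw [lmass_cons, hb, hm]
          have hmass : lmass (bds P K (m - 1)) ≤ lmass (bds P K m) + 1 := by
            have := ih m 0 (-1) (Or.inr rfl)
            simpa [sub_eq_add_neg] using this
          have : (b - 1 + P).natAbs = b.natAbs := by omega
          omega
    · -- j = j'+1
      have hhead : bd P (n + ε * P ^ (j + 1)) = bd P n := by
        apply bd_congr hP hodd
        have : n + ε * P ^ (j + 1) - n = ε * P ^ (j+1) := by ring
        refine ⟨(n - bd P n)/P - (n - bd P n)/P + ε * P ^ j, ?_⟩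
        have : n + ε * P ^ (j + 1) - n = P * (ε * P ^ j) := by rw [pow_succ]; ring
        rw [this]; ring
      have htail : (n + ε * P ^ (j + 1) - bd P n) / P
          = (n - bd P n) / P + ε * P ^ j := by
        have hdiv := sub_bd_div hP n
        have : n + ε * P ^ (j + 1) - bd P n = P * ((n - bd P n) / P + ε * P ^ j) := by
          rw [mul_add, ← hdiv, pow_succ]; ring
        rw [this, Int.mul_ediv_cancel_left _ hP0]
      conv_lhs => rw [bds]
      rw [hhead, htail, lmass_cons]
      conv_rhs => rw [bds]
      rw [lmass_cons]
      have := ih ((n - bd P n) / P) j ε hε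
      omega

lemma mass_add_nat {P : ℤ} (hP : 2 < P) (hodd : P % 2 = 1) (K : ℕ) :
    ∀ (a : ℕ) (n : ℤ) (j : ℕ) (ε : ℤ), (ε = 1 ∨ ε = -1) →
      lmass (bds P K (n + (a : ℤ) * ε * P ^ j)) ≤ lmass (bds P K n) + a := by
  intro a
  induction a with
  | zero => intro n j ε hε; simp
  | succ a ih =>
    intro n j ε hε
    have h1 : n + ((a:ℤ) + 1) * ε * P ^ j = (n + (a:ℤ) * ε * P ^ j) + ε * P ^ j := by ring
    push_cast
    rw [h1]
    calc lmass (bds P K (n + (a:ℤ) * ε * P ^ j + ε * P ^ j))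
        ≤ lmass (bds P K (n + (a:ℤ) * ε * P ^ j)) + 1 := mass_add_unit hP hodd K _ j ε hε
      _ ≤ lmass (bds P K n) + a + 1 := by have := ih n j ε hε; omega

lemma mass_add_int {P : ℤ} (hP : 2 < P) (hodd : P % 2 = 1) (K : ℕ) (n c : ℤ) (j : ℕ) :
    lmass (bds P K (n + c * P ^ j)) ≤ lmass (bds P K n) + c.natAbs := by
  rcases le_or_gt 0 c with hc | hc
  · have : c = (c.natAbs : ℤ) * 1 := by omega
    rw [show c * P ^ j = (c.natAbs : ℤ) * 1 * P ^ j by rw [← this]]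
    exact mass_add_nat hP hodd K c.natAbs n j 1 (Or.inl rfl)
  · have : c = (c.natAbs : ℤ) * (-1) := by omega
    rw [show c * P ^ j = (c.natAbs : ℤ) * (-1) * P ^ j by rw [← this]]
    exact mass_add_nat hP hodd K c.natAbs n j (-1) (Or.inr rfl)

lemma mass_add_sum {P : ℤ} (hP : 2 < P) (hodd : P % 2 = 1) (K : ℕ) (n : ℤ)
    (s : Finset ℕ) (c : ℕ → ℤ) (j : ℕ → ℕ) :
    lmass (bds P K (n + ∑ k ∈ s, c k * P ^ (j k))) ≤
      lmass (bds P K n) + ∑ k ∈ s, (c k).natAbs := by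
  classical
  induction s using Finset.induction_on with
  | empty => simp
  | insert _ _ hk ih =>
    rename_i a s'
    rw [Finset.sum_insert hk, Finset.sum_insert hk]
    have h1 : n + (c a * P ^ j a + ∑ k ∈ s', c k * P ^ (j k))
        = (n + ∑ k ∈ s', c k * P ^ (j k)) + c a * P ^ j a := by ring
    rw [h1]
    calc lmass (bds P K ((n + ∑ k ∈ s', c k * P ^ (j k)) + c a * P ^ j a))
        ≤ lmass (bds P K (n + ∑ k ∈ s', c k * P ^ (j k))) + (c a).natAbs :=
          mass_add_int hP hodd K _ _ _
      _ ≤ lmass (bds P K n) + ∑ k ∈ s', (c k).natAbs + (c a).natAbs := by omega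
      _ = lmass (bds P K n) + ((c a).natAbs + ∑ k ∈ s', (c k).natAbs) := by omega

lemma lval_eq_sum (P : ℤ) : ∀ L : List ℤ,
    lval P L = ∑ j ∈ Finset.range L.length, L.getD j 0 * P ^ j := by
  intro L
  induction L with
  | nil => simp
  | cons d T ih =>
    rw [lval_cons, List.length_cons, Finset.sum_range_succ']
    simp only [List.getD_cons_succ, List.getD_cons_zero, pow_zero, mul_one, pow_succ]
    rw [ih, Finset.mul_sum, add_comm]
    congr 1
    apply Finset.sum_congr rfl
    intro j hj
    ring

lemma lmass_eq_sum : ∀ L : List ℤ,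
    lmass L = ∑ j ∈ Finset.range L.length, (L.getD j 0).natAbs := by
  intro L
  induction L with
  | nil => simp
  | cons d T ih =>
    rw [lmass_cons, List.length_cons, Finset.sum_range_succ']
    simp only [List.getD_cons_succ, List.getD_cons_zero]
    rw [ih]
    omega
    

lemma bds_zero {P : ℤ} (hP : 2 < P) (hodd : P % 2 = 1) (K : ℕ) {n : ℤ} (h : P ^ K ∣ n) :
    List.replicate K 0 = bds P K n := by
  apply bds_unique hP hodd K _ _ (by simp)
  · intro d hd
    rw [List.eq_of_mem_replicate hd]
    constructor <;> omega
  · rw [lval_replicate_zero]; simpa using h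


lemma three_pow_bound : ∀ m : ℕ, 2 * m + 1 ≤ 3 ^ m := by
  intro m
  induction m with
  | zero => simp
  | succ m ih =>
    have h : 3 ^ (m + 1) = 3 * 3 ^ m := by ring
    omega

lemma lval_bound {P : ℤ} (hP : 2 < P) : ∀ (L : List ℤ), (∀ d ∈ L, Bal P d) →
    -(P ^ L.length - 1) ≤ 2 * lval P L ∧ 2 * lval P L ≤ P ^ L.length - 1 := by
  intro L
  induction L with
  | nil => simp
  | cons d T ih =>
    intro hbal
    obtain ⟨h1a, h1b⟩ := hbal d List.mem_cons_self
    obtain ⟨h2a, h2b⟩ := ih (fun x hx => hbal x (List.mem_cons_of_mem _ hx))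
    rw [lval_cons, List.length_cons, pow_succ]
    have h3 : P * (2 * lval P T) ≤ P * (P ^ T.length - 1) :=
      mul_le_mul_of_nonneg_left h2b (by omega)
    have h4 : P * (-(P ^ T.length - 1)) ≤ P * (2 * lval P T) :=
      mul_le_mul_of_nonneg_left h2a (by omega)
    constructor <;> nlinarith

lemma bds_self {P : ℤ} (hP : 2 < P) (hodd : P % 2 = 1) (l : ℕ) (μ : ℤ) (hμ : μ.natAbs ≤ l) :
    lval P (bds P l μ) = μ := by
  have hcor := bds_correct hP l μ
  have hbal := bds_balanced hP hodd l μ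
  have hbound := lval_bound hP (bds P l μ) hbal
  rw [bds_length] at hbound
  have h3l : (2 * (l:ℤ) + 1) ≤ P ^ l := by
    have h1 : 2 * l + 1 ≤ 3 ^ l := three_pow_bound l
    have h2 : (3:ℤ) ^ l ≤ P ^ l := pow_le_pow_left₀ (by omega) (by omega) l
    have h1' : ((2 * l + 1 : ℕ) : ℤ) ≤ ((3 ^ l : ℕ) : ℤ) := by exact_mod_cast h1
    push_cast at h1'
    linarith
  have habs : |μ - lval P (bds P l μ)| < P ^ l := by
    rw [abs_lt]
    have hμ2 : (μ.natAbs : ℤ) ≤ (l:ℤ) := by exact_mod_cast hμ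
    have hμ3 : -(l:ℤ) ≤ μ ∧ μ ≤ (l:ℤ) := by omega
    constructor <;> linarith [hbound.1, hbound.2, hμ3.1, hμ3.2]
  have := Int.eq_zero_of_abs_lt_dvd hcor habs
  omega

end Stmt16Aux


/-- For `z ∈ ℤ(p^∞)(l,1)_e` and `y = e_{n₁} + ⋯ + e_{n_f}` with `l < f` and
`nᵢ < n_{i+1} - l`, one has `o(μy + z) ≥ p^{n_{f-l} - l} ≥ p^{n₁ - l}` for all
integers `μ` with `0 < |μ| ≤ l`. -/
theorem stmt16 (p : ℕ) (hp : p.Prime) (hodd : p ≠ 2) (l f : ℕ) (hlf : l < f)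
    (z : Prufer p) (hz : z ∈ TSet (fun k => eP p k) l 1)
    (n : ℕ → ℕ) (hpos : 0 < n 0)
    (hmono : ∀ i, i + 1 < f → n i < n (i + 1))
    (hgap : ∀ i, i + 1 < f → n i + l < n (i + 1))
    (y : Prufer p) (hy : y = ∑ i ∈ Finset.range f, eP p (n i))
    (μ : ℤ) (hμ0 : μ ≠ 0) (hμl : μ.natAbs ≤ l) :
    p ^ (n 0 - l) ≤ p ^ (n (f - l - 1) - l) ∧
    p ^ (n (f - l - 1) - l) ≤ addOrderOf (μ • y + z) := by
  classical
  open Stmt16Aux in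
  obtain ⟨s, c, hs1, hc0, hcl, hzeq⟩ := hz
  have hp3 : 3 ≤ p := by
    have h2 := hp.two_le
    omega
  set P : ℤ := (p : ℤ) with hPdef
  have hP : 2 < P := by omega
  have hPodd : P % 2 = 1 := by
    have h1 : p % 2 = 1 := Nat.odd_iff.mp (hp.odd_of_ne_two hodd)
    omega
  have hl1 : 1 ≤ l := by
    have h1 : 1 ≤ μ.natAbs := by omega
    omega
  have hle : ∀ j, j < f → ∀ i, i ≤ j → n i ≤ n j := by
    intro j
    induction j with
    | zero =>
      intro _ i hi
      have h : i = 0 := by omega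
      rw [h]
    | succ j ih =>
      intro hj i hi
      rcases Nat.lt_or_ge i (j + 1) with h | h
      · have h1 : n i ≤ n j := ih (by omega) i (by omega)
        have h2 : n j < n (j + 1) := hmono j hj
        omega
      · have h : i = j + 1 := by omega
        rw [h]
  have hgap' : ∀ i j, i < j → j < f → n i + l < n j := by
    intro i j hij hj
    have h1 : n i ≤ n (j - 1) := hle (j - 1) (by omega) i (by omega)
    have hj1 : j - 1 + 1 = j := by omega
    have h2 := hgap (j - 1) (by rw [hj1]; exact hj)
    rw [hj1] at h2
    omega
  set F := f - l - 1 with hF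
  have hFf : F < f := by omega
  set N := n F with hN
  set K := max (n (f - 1)) (s.sup id) with hK
  have hKn : ∀ i, i < f → n i ≤ K := by
    intro i hi
    exact le_trans (hle (f - 1) (by omega) i (by omega)) (le_max_left _ _)
  have hKs : ∀ k ∈ s, k ≤ K := fun k hk =>
    le_trans (Finset.le_sup (f := id) hk) (le_max_right _ _)
  have hNK : N ≤ K := hKn F hFf
  set A : ℤ := (∑ i ∈ Finset.range f, μ * P ^ (K - n i)) + ∑ k ∈ s, c k * P ^ (K - k) with hA
  set X := μ • y + z with hX
  have hpQ0 : (p : ℚ) ≠ 0 := Nat.cast_ne_zero.mpr (by omega)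
  have hkey : ∀ m : ℕ, m ≤ K → ((p:ℚ) ^ m)⁻¹ * (p:ℚ) ^ K = (p:ℚ) ^ (K - m) := by
    intro m hm
    have h2 : (p:ℚ) ^ (K - m) * (p:ℚ) ^ m = (p:ℚ) ^ K := by
      rw [← pow_add]
      congr 1
      omega
    field_simp [← h2]
    rw [← h2]; ring
  have hXcoe : ((X : Prufer p) : AddCircle (1:ℚ))
      = CC ((A : ℚ) / (p:ℚ) ^ K) := by
    have hy' : ((y : Prufer p) : AddCircle (1:ℚ))
        = CC (∑ i ∈ Finset.range f, ((p:ℚ) ^ (n i))⁻¹) := by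
      rw [hy, ← AddSubgroup.coe_subtype, map_sum, map_sum]
      rfl
    have hz' : ((z : Prufer p) : AddCircle (1:ℚ))
        = CC (∑ k ∈ s, (c k : ℚ) * ((p:ℚ) ^ k)⁻¹) := by
      rw [hzeq, ← AddSubgroup.coe_subtype, map_sum, map_sum]
      apply Finset.sum_congr rfl
      intro k hk
      have h1 : ((Prufer p).subtype) (c k • eP p k) = c k • ((eP p k : Prufer p) : AddCircle (1:ℚ)) := by
        rw [map_zsmul, AddSubgroup.coe_subtype]
      rw [h1]
      have h2 : ((eP p k : Prufer p) : AddCircle (1:ℚ)) = CC (((p:ℚ) ^ k)⁻¹) := rfl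
      rw [h2, ← AddMonoidHom.map_zsmul]
      congr 1
    have h1 : ((X : Prufer p) : AddCircle (1:ℚ))
        = μ • ((y : Prufer p) : AddCircle (1:ℚ)) + ((z : Prufer p) : AddCircle (1:ℚ)) := by
      rw [hX, AddSubgroup.coe_add, AddSubgroup.coe_zsmul]
    rw [h1, hy', hz', ← AddMonoidHom.map_zsmul, ← map_add]
    congr 1
    rw [zsmul_eq_mul]
    rw [eq_div_iff (pow_ne_zero K hpQ0), add_mul]
    have hA1 : (μ:ℚ) * (∑ i ∈ Finset.range f, ((p:ℚ) ^ (n i))⁻¹) * (p:ℚ) ^ K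
        = ∑ i ∈ Finset.range f, (μ:ℚ) * (p:ℚ) ^ (K - n i) := by
      rw [mul_assoc, Finset.sum_mul, Finset.mul_sum]
      apply Finset.sum_congr rfl
      intro i hi
      rw [hkey (n i) (hKn i (Finset.mem_range.mp hi))]
    have hA2 : (∑ k ∈ s, (c k : ℚ) * ((p:ℚ) ^ k)⁻¹) * (p:ℚ) ^ K
        = ∑ k ∈ s, (c k : ℚ) * (p:ℚ) ^ (K - k) := by
      rw [Finset.sum_mul]
      apply Finset.sum_congr rfl
      intro k hk
      rw [mul_assoc, hkey k (hKs k hk)]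
    rw [hA1, hA2, hA, hPdef]
    push_cast
    ring
  have hsm : ∀ t : ℕ, t ≤ K → ((p ^ t • X = 0) ↔ P ^ (K - t) ∣ A) := by
    intro t ht
    have hsplit : (p:ℚ) ^ K = (p:ℚ) ^ (K - t) * (p:ℚ) ^ t := by
      rw [← pow_add]
      congr 1
      omega
    have hco : ((p ^ t • X : Prufer p) : AddCircle (1:ℚ))
        = CC ((A:ℚ) / (p:ℚ) ^ (K - t)) := by
      rw [AddSubgroup.coe_nsmul, hXcoe, ← AddMonoidHom.map_nsmul]
      congr 1
      rw [nsmul_eq_mul]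
      push_cast
      rw [hsplit]
      field_simp
    constructor
    · intro h0
      have h1 : CC ((A:ℚ) / (p:ℚ) ^ (K - t)) = 0 := by
        rw [← hco]
        exact_mod_cast ZeroMemClass.coe_eq_zero.mpr h0
      have h2 : (((A:ℚ) / (p:ℚ) ^ (K - t) : ℚ) : AddCircle (1:ℚ)) = 0 := h1
      obtain ⟨m, hm⟩ := (AddCircle.coe_eq_zero_iff _).mp h2
      rw [zsmul_eq_mul, mul_one] at hm
      rw [eq_comm, div_eq_iff (pow_ne_zero _ hpQ0)] at hm
      refine ⟨m, ?_⟩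
      have h3 : (A:ℚ) = (((P:ℤ) ^ (K - t) * m : ℤ) : ℚ) := by
        rw [hPdef]
        push_cast
        rw [hm]
        ring
      exact_mod_cast h3
    · rintro ⟨m, hm⟩
      have h2 : (((A:ℚ) / (p:ℚ) ^ (K - t) : ℚ) : AddCircle (1:ℚ)) = 0 := by
      
        apply (AddCircle.coe_eq_zero_iff _).mpr
        refine ⟨m, ?_⟩
        rw [zsmul_eq_mul, mul_one, eq_comm, div_eq_iff (pow_ne_zero _ hpQ0)]
        rw [hm, hPdef]
        push_cast
        ring
      have h1 : CC ((A:ℚ) / (p:ℚ) ^ (K - t)) = 0 := h2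
      rw [← hco] at h1
      exact ZeroMemClass.coe_eq_zero.mp h1
  have hfin : p ^ K • X = 0 := by
    apply (hsm K le_rfl).mpr
    rw [Nat.sub_self, pow_zero]
    exact one_dvd A
  have hdvdord : addOrderOf X ∣ p ^ K := addOrderOf_dvd_of_nsmul_eq_zero hfin
  obtain ⟨d, hdK, hdeq⟩ := (Nat.dvd_prime_pow hp).mp hdvdord
  have hmain : l < N → ¬ (P ^ (K - (N - l - 1)) ∣ A) := by
    intro hlN hdvd
    set K' := K - (N - l - 1) with hK'
    have hμval : lval P (bds P l μ) = μ := bds_self hP hPodd l μ hμl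
    set E := bds P l μ with hE
    have hElen : E.length = l := bds_length P l μ
    have hEbal : ∀ d ∈ E, Bal P d := bds_balanced hP hPodd l μ
    obtain ⟨t₀, ht₀l, ht₀⟩ : ∃ t₀, t₀ < l ∧ E.getD t₀ 0 ≠ 0 := by
      by_contra hcon
      push_neg at hcon
      have h0 : lval P E = 0 := by
        rw [lval_eq_sum, hElen]
        apply Finset.sum_eq_zero
        intro j hj
        rw [hcon j (Finset.mem_range.mp hj), zero_mul]
      exact hμ0 (by rw [← hμval, h0])
    set tm : ℕ → ℕ → ℤ := fun i j => if K - n i ≤ j then E.getD (j - (K - n i)) 0 else 0 with htm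
    set Lf : ℕ → ℤ := fun j => ∑ i ∈ Finset.Ico F f, tm i j with hLf
    have hge : ∀ i, F ≤ i → i < f → N ≤ n i := fun i h1 h2 => hle i h2 F h1
    have hsupp : ∀ i j, tm i j ≠ 0 → K - n i ≤ j ∧ j < K - n i + l := by
      intro i j h
      by_cases h1 : K - n i ≤ j
      · refine ⟨h1, ?_⟩
        by_contra h2
        push_neg at h2
        apply h
        simp only [htm]
        rw [if_pos h1]
        apply List.getD_eq_default
        rw [hElen]
        omega
      · exact absurd (by simp only [htm]; rw [if_neg h1]) h
    have hvanish : ∀ i i', F ≤ i → i < f → F ≤ i' → i' < f → i ≠ i' →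
        ∀ j, K - n i ≤ j → j < K - n i + l → tm i' j = 0 := by
      intro i i' hFi hif hFi' hi'f hne j hj1 hj2
      rcases Nat.lt_or_ge i i' with hlt | hge2
      · have hg := hgap' i i' hlt hi'f
        have hKi' : n i' ≤ K := hKn i' hi'f
        simp only [htm]
        rw [if_pos (by omega)]
        apply List.getD_eq_default
        rw [hElen]
        omega
      · have hlt : i' < i := by omega
        have hg := hgap' i' i hlt hif
        have hKi : n i ≤ K := hKn i hif
        simp only [htm]
        rw [if_neg (by omega)]
    have hbalL : ∀ j, Bal P (Lf j) := by
      intro j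
      by_cases hex : ∃ i, i ∈ Finset.Ico F f ∧ tm i j ≠ 0
      · obtain ⟨i0, hi0m, hi0⟩ := hex
        obtain ⟨hi0F, hi0f⟩ := Finset.mem_Ico.mp hi0m
        have hj1 := hsupp i0 j hi0
        have hLfj : Lf j = tm i0 j := by
          simp only [hLf]
          apply Finset.sum_eq_single_of_mem i0 hi0m
          intro i' hi'm hne
          obtain ⟨h1, h2⟩ := Finset.mem_Ico.mp hi'm
          exact hvanish i0 i' hi0F hi0f h1 h2 (Ne.symm hne) j hj1.1 hj1.2
        rw [hLfj]
        simp only [htm]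
        rw [if_pos hj1.1]
        have hmem : E.getD (j - (K - n i0)) 0 ∈ E := by
          rw [List.getD_eq_getElem E 0 (by rw [hElen]; omega)]
          exact List.getElem_mem _
        exact hEbal _ hmem
      · push_neg at hex
        have h0 : Lf j = 0 := Finset.sum_eq_zero (fun i hi => hex i hi)
        rw [h0]
        constructor <;> omega
    set L := (List.range K').map Lf with hL
    have hLlen : L.length = K' := by simp [hL]
    have hLgetD : ∀ j, j < K' → L.getD j 0 = Lf j := by
      intro j hj
      rw [hL, List.getD_eq_getElem _ _ (by simpa using hj)]
      simp
    have hIcoSub : ∀ i, i ∈ Finset.Ico F f → K - n i + l < K' := by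
      intro i hi
      obtain ⟨h1, h2⟩ := Finset.mem_Ico.mp hi
      have h3 := hge i h1 h2
      have h4 := hKn i h2
      omega
    have hLval : lval P L = ∑ i ∈ Finset.Ico F f, μ * P ^ (K - n i) := by
      rw [lval_eq_sum, hLlen]
      have h1 : ∀ j ∈ Finset.range K', L.getD j 0 * P ^ j = ∑ i ∈ Finset.Ico F f, tm i j * P ^ j := by
        intro j hj
        rw [hLgetD j (Finset.mem_range.mp hj)]
        simp only [hLf]
        rw [Finset.sum_mul]
      rw [Finset.sum_congr rfl h1, Finset.sum_comm]
      apply Finset.sum_congr rfl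
      intro i hi
      have hmem := Finset.mem_Ico.mp hi
      have hsub : Finset.Ico (K - n i) (K - n i + l) ⊆ Finset.range K' := by
        intro j hj
        rw [Finset.mem_range]
        have h5 := Finset.mem_Ico.mp hj
        have h6 := hIcoSub i hi
        omega
      rw [← Finset.sum_subset hsub ?hzero]
      case hzero =>
        intro j hjr hjn
        have h0 : tm i j = 0 := by
          by_contra hc
          have := hsupp i j hc
          rw [Finset.mem_Ico] at hjn
          omega
        rw [h0, zero_mul]
      rw [Finset.sum_Ico_eq_sum_range]
      have hll : K - n i + l - (K - n i) = l := by omega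
      rw [hll]
      have h2 : ∀ u ∈ Finset.range l,
          tm i (K - n i + u) * P ^ (K - n i + u) = E.getD u 0 * P ^ u * P ^ (K - n i) := by
        intro u hu
        simp only [htm]
        rw [if_pos (by omega)]
        have h7 : K - n i + u - (K - n i) = u := by omega
        rw [h7, pow_add]
        ring
      rw [Finset.sum_congr rfl h2, ← Finset.sum_mul]
      have h3 : ∑ u ∈ Finset.range l, E.getD u 0 * P ^ u = μ := by
        rw [← hElen, ← lval_eq_sum, hμval]
      rw [h3]
    set W := ∑ i ∈ Finset.range f, μ * P ^ (K - n i) with hW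
    have hWL : P ^ K' ∣ W - lval P L := by
      rw [hLval, hW]
      have hsplit2 : ∑ i ∈ Finset.range f, μ * P ^ (K - n i)
          = (∑ i ∈ Finset.Ico 0 F, μ * P ^ (K - n i)) + ∑ i ∈ Finset.Ico F f, μ * P ^ (K - n i) := by
        rw [Finset.sum_Ico_consecutive _ (by omega) (by omega), ← Finset.range_eq_Ico]
      rw [hsplit2, add_sub_cancel_right]
      apply Finset.dvd_sum
      intro i hi
      obtain ⟨_, hiF⟩ := Finset.mem_Ico.mp hi
      have h1 : n i ≤ n (F - 1) := hle (F - 1) (by omega) i (by omega)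
      have h2 : n (F - 1) + l < N := hgap' (F - 1) F (by omega) hFf
      have h3 : n i ≤ K := hKn i (by omega)
      exact (pow_dvd_pow P (by omega)).mul_left μ
    have hLbds : L = bds P K' W := by
      apply bds_unique hP hPodd K' L W hLlen ?_ hWL
      intro d hd
      rw [hL] at hd
      obtain ⟨a, ha, rfl⟩ := List.mem_map.mp hd
      exact hbalL a
    have hmassL : l + 1 ≤ lmass L := by
      rw [lmass_eq_sum, hLlen]
      have hTsub : (Finset.Ico F f).image (fun i => K - n i + t₀) ⊆ Finset.range K' := by
        intro j hj
        obtain ⟨i, hi, rfl⟩ := Finset.mem_image.mp hj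
        rw [Finset.mem_range]
        have := hIcoSub i hi
        omega
      have hsum1 : ∑ j ∈ (Finset.Ico F f).image (fun i => K - n i + t₀), (L.getD j 0).natAbs
          ≤ ∑ j ∈ Finset.range K', (L.getD j 0).natAbs :=
        Finset.sum_le_sum_of_subset hTsub
      have hinj : ∀ i ∈ Finset.Ico F f, ∀ i' ∈ Finset.Ico F f,
          K - n i + t₀ = K - n i' + t₀ → i = i' := by
        intro i hi i' hi' heq
        by_contra hne
        obtain ⟨h1, h2⟩ := Finset.mem_Ico.mp hi
        obtain ⟨h1', h2'⟩ := Finset.mem_Ico.mp hi'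
        rcases Nat.lt_or_ge i i' with hlt | hge2
        · have hg := hgap' i i' hlt h2'
          have hK2 := hKn i' h2'
          omega
        · have hlt : i' < i := by omega
          have hg := hgap' i' i hlt h2
          have hK2 := hKn i h2
          omega
      have hsum2 : ∑ j ∈ (Finset.Ico F f).image (fun i => K - n i + t₀), (L.getD j 0).natAbs
          = ∑ i ∈ Finset.Ico F f, (L.getD (K - n i + t₀) 0).natAbs :=
        Finset.sum_image hinj
      have hterm : ∀ i ∈ Finset.Ico F f,
          (L.getD (K - n i + t₀) 0).natAbs = (E.getD t₀ 0).natAbs := by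
        intro i hi
        obtain ⟨h1, h2⟩ := Finset.mem_Ico.mp hi
        rw [hLgetD _ (by have := hIcoSub i hi; omega)]
        have hLfv : Lf (K - n i + t₀) = tm i (K - n i + t₀) := by
          simp only [hLf]
          apply Finset.sum_eq_single_of_mem i hi
          intro i' hi'm hne
          obtain ⟨h1', h2'⟩ := Finset.mem_Ico.mp hi'm
          exact hvanish i i' h1 h2 h1' h2' (Ne.symm hne) _ (by omega) (by omega)
        rw [hLfv]
        simp only [htm]
        rw [if_pos (by omega)]
        congr 2
        omega
      have hsum3 : ∑ i ∈ Finset.Ico F f, (L.getD (K - n i + t₀) 0).natAbs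
          = (l + 1) * (E.getD t₀ 0).natAbs := by
        rw [Finset.sum_congr rfl hterm, Finset.sum_const, Nat.card_Ico, smul_eq_mul]
        congr 1
        omega
      have hEpos : 1 ≤ (E.getD t₀ 0).natAbs := by omega
      have hstep : l + 1 ≤ (l + 1) * (E.getD t₀ 0).natAbs :=
        Nat.le_mul_of_pos_right _ (by omega)
      omega
    have hWA : W = A + ∑ k ∈ s, -(c k) * P ^ (K - k) := by
      rw [hA, add_assoc, ← Finset.sum_add_distrib]
      have h0 : ∀ k ∈ s, c k * P ^ (K - k) + -(c k) * P ^ (K - k) = 0 := by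
        intro k hk
        ring
      rw [Finset.sum_congr rfl h0, Finset.sum_const_zero, add_zero]
    have hmassW : lmass (bds P K' W) ≤ l := by
      rw [hWA]
      calc lmass (bds P K' (A + ∑ k ∈ s, -(c k) * P ^ (K - k)))
          ≤ lmass (bds P K' A) + ∑ k ∈ s, (-(c k)).natAbs :=
            mass_add_sum hP hPodd K' A s _ _
        _ = ∑ k ∈ s, (c k).natAbs := by
            rw [← bds_zero hP hPodd K' hdvd, lmass_replicate_zero]
            simp [Int.natAbs_neg]
        _ ≤ l := hcl
    rw [hLbds] at hmassL
    omega
  constructor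
  · apply Nat.pow_le_pow_right hp.pos
    have h1 : n 0 ≤ n F := hle F hFf 0 (by omega)
    omega
  · rcases le_or_gt N l with hNl | hNl
    · have h0 : N - l = 0 := by omega
      rw [h0, pow_zero]
      have h1 : 0 < addOrderOf X := by
        rw [hdeq]
        exact Nat.pow_pos (n := d) hp.pos
      omega
    · have hneq : ¬ (p ^ (N - l - 1) • X = 0) := by
        intro h
        exact hmain hNl ((hsm (N - l - 1) (by omega)).mp h)
      have hdge : N - l ≤ d := by
        by_contra hc
        push_neg at hc
        apply hneq
        apply addOrderOf_dvd_iff_nsmul_eq_zero.mp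
        rw [hdeq]
        exact pow_dvd_pow p (by omega)
      calc p ^ (N - l) ≤ p ^ d := Nat.pow_le_pow_right hp.pos hdge
        _ = addOrderOf X := hdeq.symm
end
end

section
/- Let χ: ℤ(p^∞) → 𝕋 = ℝ/ℤ be a character corresponding to the p-adic integer Σ α_n p^n (0 ≤ α_n ≤ p−1), let {n_k} be increasing with n_{k+1} − n_k → ∞, and let γ ∈ (0,1). Then χ(e_{n_k}) → γ in 𝕋 if and only if r_k := (Σ_{l=n_k}^{n_{k+1}−1} α_l p^{l−n_k}) / p^{n_{k+1}−n_k} → γ in ℝ. -/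
open Filter Topology

lemma geom_sum_p (p m : ℕ) (hp : 2 ≤ p) :
    ∑ l ∈ Finset.range m, (p-1) * p ^ l = p ^ m - 1 := by
  induction m with
  | zero => simp
  | succ m ih =>
    rw [Finset.sum_range_succ, ih]
    have h1 : 1 ≤ p ^ m := Nat.one_le_pow _ _ (by omega)
    have h3 : p ^ (m+1) = p * p ^ m := by ring
    have h4 : (p-1) * p ^ m = p * p ^ m - 1 * p ^ m := by rw [← Nat.sub_mul]
    have h5 : 2 * p ^ m ≤ p * p ^ m := Nat.mul_le_mul_right _ hp
    omega

lemma sum_lt_pow (p : ℕ) (hp : 2 ≤ p) (α : ℕ → ℕ) (hα : ∀ i, α i ≤ p - 1) (m : ℕ) :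
    (∑ l ∈ Finset.range m, α l * p ^ l) < p ^ m := by
  have h : (∑ l ∈ Finset.range m, α l * p ^ l) ≤ ∑ l ∈ Finset.range m, (p-1) * p ^ l :=
    Finset.sum_le_sum fun i _ => Nat.mul_le_mul_right _ (hα i)
  have h1 : 1 ≤ p ^ m := Nat.one_le_pow _ _ (by omega)
  rw [geom_sum_p p m hp] at h
  omega

/-- For a character `χ = Σ αₙ pⁿ ∈ ℤ_p` of `ℤ(p^∞)` (acting by
`χ(e_m) = (Σ_{l<m} α_l p^l)/p^m mod 1`), with `n_{k+1} - n_k → ∞` and `γ ∈ (0,1)`: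
`χ(e_{n_k}) → γ` in `𝕋 = ℝ/ℤ` iff
`r_k = (Σ_{l=n_k}^{n_{k+1}-1} α_l p^{l-n_k}) / p^{n_{k+1}-n_k} → γ` in `ℝ`. -/
theorem stmt17 (p : ℕ) (hp : p.Prime) (α : ℕ → ℕ) (hα : ∀ i, α i ≤ p - 1)
    (n : ℕ → ℕ) (hmono : StrictMono n)
    (hgap : Filter.Tendsto (fun k => n (k + 1) - n k) Filter.atTop Filter.atTop)
    (γ : ℝ) (hγ : γ ∈ Set.Ioo (0 : ℝ) 1) :
    Filter.Tendsto
        (fun k => ((((∑ l ∈ Finset.range (n k), α l * p ^ l : ℕ) : ℝ) / (p : ℝ) ^ n k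
          : ℝ) : AddCircle (1 : ℝ)))
        Filter.atTop (nhds ((γ : ℝ) : AddCircle (1 : ℝ))) ↔
      Filter.Tendsto
        (fun k => (((∑ l ∈ Finset.Ico (n k) (n (k + 1)), α l * p ^ (l - n k) : ℕ) : ℝ) /
          (p : ℝ) ^ (n (k + 1) - n k)))
        Filter.atTop (nhds γ) := by
  have hp2 : 2 ≤ p := hp.two_le
  have hp1 : (1:ℝ) < (p:ℝ) := by exact_mod_cast hp.one_lt
  have hppos : (0:ℝ) < (p:ℝ) := by linarith
  set S : ℕ → ℕ := fun m => ∑ l ∈ Finset.range m, α l * p ^ l with hSdef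
  set T : ℕ → ℕ := fun k => ∑ l ∈ Finset.Ico (n k) (n (k+1)), α l * p ^ (l - n k) with hTdef
  set g : ℕ → ℕ := fun k => n (k+1) - n k with hgdef
  set a : ℕ → ℝ := fun k => (S (n k) : ℝ) / (p:ℝ) ^ (n k) with hadef
  set r : ℕ → ℝ := fun k => (T k : ℝ) / (p:ℝ) ^ (g k) with hrdef
  set ε : ℕ → ℝ := fun k => a k / (p:ℝ) ^ (g k) with hεdef
  have hle : ∀ k, n k ≤ n (k+1) := fun k => (hmono (Nat.lt_succ_self k)).le
  have hpowpos : ∀ m : ℕ, (0:ℝ) < (p:ℝ) ^ m := fun m => pow_pos hppos m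
  -- bounds
  have hSlt : ∀ m, (S m : ℝ) < (p:ℝ) ^ m := by
    intro m
    have := sum_lt_pow p hp2 α hα m
    exact_mod_cast this
  have ha_nonneg : ∀ k, 0 ≤ a k := fun k =>
    div_nonneg (Nat.cast_nonneg _) (hpowpos _).le
  have ha_lt : ∀ k, a k < 1 :=
    fun k => (div_lt_one (hpowpos _)).2 (hSlt _)
  have hT_lt : ∀ k, (T k : ℝ) < (p:ℝ) ^ (g k) := by
    intro k
    have : T k = ∑ i ∈ Finset.range (g k), α (n k + i) * p ^ i := by
      show (∑ l ∈ Finset.Ico (n k) (n (k+1)), α l * p ^ (l - n k)) = _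
      rw [Finset.sum_Ico_eq_sum_range]
      exact Finset.sum_congr rfl fun i _ => by rw [Nat.add_sub_cancel_left]
    rw [this]
    exact_mod_cast sum_lt_pow p hp2 (fun i => α (n k + i)) (fun i => hα _) (g k)
  have hT_le : ∀ k, (T k : ℝ) ≤ (p:ℝ) ^ (g k) - 1 := by
    intro k
    have h := hT_lt k
    have : (T k : ℕ) < p ^ (g k) := by exact_mod_cast h
    have : (T k : ℕ) ≤ p ^ (g k) - 1 := by omega
    have h1 : (1:ℕ) ≤ p ^ (g k) := Nat.one_le_pow _ _ (by omega)
    calc (T k : ℝ) ≤ ((p ^ (g k) - 1 : ℕ) : ℝ) := by exact_mod_cast this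
      _ = (p:ℝ) ^ (g k) - 1 := by push_cast [h1]; ring
  have hr_nonneg : ∀ k, 0 ≤ r k := fun k =>
    div_nonneg (Nat.cast_nonneg _) (hpowpos _).le
  have hε_nonneg : ∀ k, 0 ≤ ε k := fun k =>
    div_nonneg (ha_nonneg k) (hpowpos _).le
  have hε_lt : ∀ k, ε k < 1 / (p:ℝ) ^ (g k) :=
    fun k => (div_lt_div_iff_of_pos_right (hpowpos _)).2 (ha_lt k)
  -- key identity
  have hkey : ∀ k, a (k+1) = ε k + r k := by
    intro k
    have hsplit : S (n (k+1)) = S (n k) + T k * p ^ (n k) := by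
      rw [hSdef]
      simp only [Finset.range_eq_Ico]
      rw [← Finset.sum_Ico_consecutive _ (Nat.zero_le (n k)) (hle k)]
      congr 1
      rw [hTdef, Finset.sum_mul]
      exact Finset.sum_congr rfl fun l hl => by
        rw [Finset.mem_Ico] at hl
        rw [mul_assoc, ← pow_add, Nat.sub_add_cancel hl.1]
    have hpow : (p:ℝ) ^ (n (k+1)) = (p:ℝ) ^ (n k) * (p:ℝ) ^ (g k) := by
      rw [← pow_add]
      congr 1
      have := hle k
      simp only [hgdef]
      omega
    rw [hadef, hεdef, hrdef, hadef]
    simp only []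
    rw [hsplit, hpow]
    push_cast
    field_simp
  -- ε → 0
  have hε0 : Filter.Tendsto ε Filter.atTop (nhds 0) := by
    apply squeeze_zero hε_nonneg (fun k => (hε_lt k).le)
    have h1 : Filter.Tendsto (fun m : ℕ => ((1:ℝ)/(p:ℝ)) ^ m) Filter.atTop (nhds 0) :=
      tendsto_pow_atTop_nhds_zero_of_lt_one (by positivity) (by
        rw [div_lt_one hppos]; exact hp1)
    have h2 := h1.comp hgap
    convert h2 using 2 with k
    simp [div_pow]
  -- the shifted sequence equality
  have hcoe : Filter.Tendsto (fun k => (a (k+1) : AddCircle (1:ℝ))) Filter.atTop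
        (nhds ((γ : ℝ) : AddCircle (1:ℝ))) ↔
      Filter.Tendsto r Filter.atTop (nhds γ) := by
    constructor
    · intro h
      -- use the local section F = liftIco 1 0 id
      set F : AddCircle (1:ℝ) → ℝ := AddCircle.liftIco 1 0 id with hF
      have hγne : ((γ : ℝ) : AddCircle (1:ℝ)) ≠ ((0:ℝ) : AddCircle (1:ℝ)) := by
        rw [QuotientAddGroup.mk_zero, Ne,
          AddCircle.coe_eq_zero_iff_of_mem_Ico ⟨hγ.1.le, hγ.2⟩]
        exact ne_of_gt hγ.1
      have hFc : ContinuousAt F ((γ : ℝ) : AddCircle (1:ℝ)) := by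
        apply ContinuousAt.comp continuous_subtype_val.continuousAt
        exact AddCircle.continuousAt_equivIco 1 0 hγne
      have hmem : ∀ k, a (k+1) ∈ Set.Ico (0:ℝ) (0 + 1) := by
        intro k
        rw [zero_add]
        exact ⟨ha_nonneg _, ha_lt _⟩
      have hFa : ∀ k, F ((a (k+1) : AddCircle (1:ℝ))) = a (k+1) := fun k =>
        AddCircle.liftIco_coe_apply (hmem k)
      have hFγ : F ((γ : ℝ) : AddCircle (1:ℝ)) = γ :=
        AddCircle.liftIco_coe_apply (by rw [zero_add]; exact ⟨hγ.1.le, hγ.2⟩)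
      have := hFc.tendsto.comp h
      rw [hFγ] at this
      have ha1 : Filter.Tendsto (fun k => a (k+1)) Filter.atTop (nhds γ) := by
        convert this using 2 with k
        exact (hFa k).symm
      have : Filter.Tendsto (fun k => a (k+1) - ε k) Filter.atTop (nhds (γ - 0)) :=
        ha1.sub hε0
      rw [sub_zero] at this
      convert this using 2 with k
      rw [hkey k]; ring
    · intro h
      have h2 : Filter.Tendsto (fun k => a (k+1)) Filter.atTop (nhds γ) := by
        have := hε0.add h
        rw [zero_add] at this
        convert this using 2 with k
        exact hkey k
      exact ((AddCircle.continuous_mk' (1:ℝ)).tendsto _).comp h2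
  rw [← hcoe]
  exact (Filter.tendsto_add_atTop_iff_nat 1).symm
end

section
/- Let B = ℤ/2ℤ ⊕ ⨁_{n=1}^∞ ℤ/3ℤ with any Hausdorff group topology τ. Then the subgroup B₂ = ⨁_{n=1}^∞ ℤ/3ℤ is closed in τ, (B, τ) is the topological direct product of B₁ = ℤ/2ℤ and B₂ (with subspace topologies), and B₁ ∩ n(B, τ) = {0}, where n(B, τ) is the von Neumann radical. -/
open Filter Topology

/-- For `B = ℤ/2ℤ ⊕ ⨁_{n=1}^∞ ℤ/3ℤ` with any Hausdorff group topology `τ`: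
`B₂ = ⨁ ℤ/3ℤ` is closed, `τ` is the product of the subspace topologies on `B₁ = ℤ/2ℤ`
and `B₂`, and `B₁` meets the von Neumann radical trivially. -/
theorem stmt18 (τ : TopologicalSpace (ZMod 2 × (Π₀ _ : ℕ, ZMod 3)))
    (hτg : @IsTopologicalAddGroup (ZMod 2 × (Π₀ _ : ℕ, ZMod 3)) τ _)
    (hτ2 : @T2Space (ZMod 2 × (Π₀ _ : ℕ, ZMod 3)) τ) :
    @IsClosed _ τ {b : ZMod 2 × (Π₀ _ : ℕ, ZMod 3) | b.1 = 0} ∧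
    τ = @instTopologicalSpaceProd (ZMod 2) (Π₀ _ : ℕ, ZMod 3)
        (τ.induced (fun x : ZMod 2 => ((x, 0) : ZMod 2 × (Π₀ _ : ℕ, ZMod 3))))
        (τ.induced (fun y : Π₀ _ : ℕ, ZMod 3 =>
          ((0, y) : ZMod 2 × (Π₀ _ : ℕ, ZMod 3)))) ∧
    ∀ b : ZMod 2 × (Π₀ _ : ℕ, ZMod 3), b.2 = 0 →
      (∀ χ : (ZMod 2 × (Π₀ _ : ℕ, ZMod 3)) →+ AddCircle (1 : ℝ),
        @Continuous _ _ τ _ χ → χ b = 0) → b = 0 := by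
  classical
  letI := τ
  haveI := hτg
  haveI := hτ2
  -- the continuous endomorphism `x ↦ 3x`
  have hf : Continuous (fun b : ZMod 2 × (Π₀ _ : ℕ, ZMod 3) => (3:ℕ) • b) :=
    continuous_id.nsmul 3
  have hkey : ∀ b : ZMod 2 × (Π₀ _ : ℕ, ZMod 3), (3:ℕ) • b = (b.1, 0) := by
    intro b
    have h1 : ∀ x : ZMod 2, (3:ℕ) • x = x := by decide
    have h2 : ∀ x : ZMod 3, (3:ℕ) • x = 0 := by decide
    ext i
    · exact h1 b.1
    · simp [Prod.smul_snd, h2]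
  -- Part 1: `B₂` is closed
  have hcl : IsClosed {b : ZMod 2 × (Π₀ _ : ℕ, ZMod 3) | b.1 = 0} := by
    have he : {b : ZMod 2 × (Π₀ _ : ℕ, ZMod 3) | b.1 = 0}
        = (fun b : ZMod 2 × (Π₀ _ : ℕ, ZMod 3) => (3:ℕ) • b) ⁻¹' {0} := by
      ext b; simp [hkey b, Prod.ext_iff]
    rw [he]
    exact IsClosed.preimage hf isClosed_singleton
  refine ⟨hcl, ?_, ?_⟩
  · -- Part 2: `τ` is the product of the subspace topologies
    set t1 := τ.induced (fun x : ZMod 2 => ((x, 0) : ZMod 2 × (Π₀ _ : ℕ, ZMod 3))) with ht1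
    set t2 := τ.induced (fun y : Π₀ _ : ℕ, ZMod 3 =>
        ((0, y) : ZMod 2 × (Π₀ _ : ℕ, ZMod 3))) with ht2
    refine le_antisymm ?_ ?_
    · rw [← @continuous_id_iff_le _ τ (@instTopologicalSpaceProd _ _ t1 t2)]
      have hfst : @Continuous _ _ τ t1 Prod.fst := by
        rw [ht1, continuous_induced_rng]
        have he : ((fun x : ZMod 2 => ((x, 0) : ZMod 2 × (Π₀ _ : ℕ, ZMod 3))) ∘ Prod.fst)
            = fun b => (3:ℕ) • b := by
          funext b; simp [hkey b]
        rw [he]; exact hf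
      have hsnd : @Continuous _ _ τ t2 Prod.snd := by
        rw [ht2, continuous_induced_rng]
        have he : ((fun y : Π₀ _ : ℕ, ZMod 3 => ((0, y) : ZMod 2 × (Π₀ _ : ℕ, ZMod 3))) ∘ Prod.snd)
            = fun b => b - (3:ℕ) • b := by
          funext b; rw [hkey b]; ext i <;> simp
        rw [he]; exact continuous_id.sub hf
      exact @Continuous.prodMk _ _ _ t1 t2 τ _ _ hfst hsnd
    · rw [← @continuous_id_iff_le _ (@instTopologicalSpaceProd _ _ t1 t2) τ]
      have h1 : @Continuous _ _ (@instTopologicalSpaceProd _ _ t1 t2) τ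
          (fun b : ZMod 2 × (Π₀ _ : ℕ, ZMod 3) => ((b.1, 0) : ZMod 2 × (Π₀ _ : ℕ, ZMod 3))) :=
        @Continuous.comp _ _ _ (@instTopologicalSpaceProd _ _ t1 t2) t1 τ _ _
          (@continuous_induced_dom _ _ _ τ) (@continuous_fst _ _ t1 t2)
      have h2 : @Continuous _ _ (@instTopologicalSpaceProd _ _ t1 t2) τ
          (fun b : ZMod 2 × (Π₀ _ : ℕ, ZMod 3) => ((0, b.2) : ZMod 2 × (Π₀ _ : ℕ, ZMod 3))) :=
        @Continuous.comp _ _ _ (@instTopologicalSpaceProd _ _ t1 t2) t2 τ _ _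
          (@continuous_induced_dom _ _ _ τ) (@continuous_snd _ _ t1 t2)
      have hid : (id : ZMod 2 × (Π₀ _ : ℕ, ZMod 3) → ZMod 2 × (Π₀ _ : ℕ, ZMod 3))
          = fun b => ((b.1, 0) : ZMod 2 × (Π₀ _ : ℕ, ZMod 3)) + (0, b.2) := by
        funext b; ext i <;> simp
      rw [hid]
      exact @Continuous.add _ τ _ hτg.toContinuousAdd _ (@instTopologicalSpaceProd _ _ t1 t2)
        _ _ h1 h2
  · -- Part 3: `B₁ ∩ n(B,τ) = 0`
    have hcl1 : IsClosed {b : ZMod 2 × (Π₀ _ : ℕ, ZMod 3) | b.1 = 1} := by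
      have he : {b : ZMod 2 × (Π₀ _ : ℕ, ZMod 3) | b.1 = 1}
          = (fun b : ZMod 2 × (Π₀ _ : ℕ, ZMod 3) => b + (1, 0)) ⁻¹' {b | b.1 = 0} := by
        ext b
        have : ∀ x : ZMod 2, x + 1 = 0 ↔ x = 1 := by decide
        simp [this]
      rw [he]
      exact IsClosed.preimage (continuous_id.add continuous_const) hcl
    have hop0 : IsOpen {b : ZMod 2 × (Π₀ _ : ℕ, ZMod 3) | b.1 = 0} := by
      have he : {b : ZMod 2 × (Π₀ _ : ℕ, ZMod 3) | b.1 = 0}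
          = {b : ZMod 2 × (Π₀ _ : ℕ, ZMod 3) | b.1 = 1}ᶜ := by
        ext b
        have : ∀ x : ZMod 2, x = 0 ↔ ¬ x = 1 := by decide
        simp [this b.1]
      rw [he]; exact hcl1.isOpen_compl
    have hop1 : IsOpen {b : ZMod 2 × (Π₀ _ : ℕ, ZMod 3) | b.1 = 1} := by
      have he : {b : ZMod 2 × (Π₀ _ : ℕ, ZMod 3) | b.1 = 1}
          = {b : ZMod 2 × (Π₀ _ : ℕ, ZMod 3) | b.1 = 0}ᶜ := by
        ext b
        have : ∀ x : ZMod 2, x = 1 ↔ ¬ x = 0 := by decide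
        simp [this b.1]
      rw [he]; exact hcl.isOpen_compl
    have hf2 : (zmultiplesHom (AddCircle (1:ℝ)) (((1:ℝ)/2 : ℝ) : AddCircle (1:ℝ))) 2 = 0 := by
      show (2:ℤ) • (((1:ℝ)/2 : ℝ) : AddCircle (1:ℝ)) = 0
      rw [← AddCircle.coe_zsmul]
      norm_num
    set c : ZMod 2 →+ AddCircle (1:ℝ) :=
      ZMod.lift 2 ⟨zmultiplesHom (AddCircle (1:ℝ)) (((1:ℝ)/2 : ℝ) : AddCircle (1:ℝ)), hf2⟩ with hc
    have hc1 : c 1 = (((1:ℝ)/2 : ℝ) : AddCircle (1:ℝ)) := by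
      have h1 : (1 : ZMod 2) = ((1:ℤ) : ZMod 2) := by decide
      rw [hc, h1, ZMod.lift_coe]
      show (1:ℤ) • (((1:ℝ)/2 : ℝ) : AddCircle (1:ℝ)) = _
      rw [one_smul]
    have hc1ne : c 1 ≠ 0 := by
      rw [hc1]
      intro h
      rw [AddCircle.coe_eq_zero_iff] at h
      obtain ⟨n, hn⟩ := h
      have hr : (n : ℝ) = 1/2 := by simpa using hn
      have h2 : ((2*n : ℤ) : ℝ) = ((1:ℤ) : ℝ) := by push_cast; rw [hr]; norm_num
      have := Int.cast_injective (α := ℝ) h2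
      omega
    set χ : (ZMod 2 × (Π₀ _ : ℕ, ZMod 3)) →+ AddCircle (1:ℝ) :=
      c.comp (AddMonoidHom.fst _ _) with hχ
    have hχcont : Continuous χ := by
      rw [continuous_def]
      intro s _
      have hpre : (χ : ZMod 2 × (Π₀ _ : ℕ, ZMod 3) → AddCircle (1:ℝ)) ⁻¹' s
          = (if (0:AddCircle (1:ℝ)) ∈ s then {b : ZMod 2 × (Π₀ _ : ℕ, ZMod 3) | b.1 = 0} else ∅)
            ∪ (if c 1 ∈ s then {b : ZMod 2 × (Π₀ _ : ℕ, ZMod 3) | b.1 = 1} else ∅) := by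
        ext b
        have hb : b.1 = 0 ∨ b.1 = 1 := (by decide : ∀ x : ZMod 2, x = 0 ∨ x = 1) b.1
        have hχb : χ b = c b.1 := rfl
        constructor
        · intro hbs
          rw [Set.mem_preimage, hχb] at hbs
          rcases hb with h | h
          · left
            rw [h, map_zero] at hbs
            simp [hbs, h]
          · right
            rw [h] at hbs
            simp [hbs, h]
        · intro hbs
          rcases hbs with hbs | hbs <;> split_ifs at hbs with hs
          · have h0 : b.1 = 0 := hbs
            rw [Set.mem_preimage, hχb, h0, map_zero]; exact hs
          · exact hbs.elim
          · have h1 : b.1 = 1 := hbs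
            rw [Set.mem_preimage, hχb, h1]; exact hs
          · exact hbs.elim
      rw [hpre]
      apply IsOpen.union <;> split_ifs <;> simp [hop0, hop1]
    intro b hb2 hall
    have hcb : c b.1 = 0 := hall χ hχcont
    have hb1 : b.1 = 0 := by
      rcases (by decide : ∀ x : ZMod 2, x = 0 ∨ x = 1) b.1 with h | h
      · exact h
      · rw [h] at hcb; exact absurd hcb hc1ne
    ext i
    · exact hb1
    · simp [hb2]
end
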